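/- arXiv:1106.0728 — 4 statements merged into one kernel-verified Lean document; each statement's English description precedes it below -/
import Mathlib

section
/- (i) The correspondence (φ,ψ) ↦ φ is a bijection from 𝒢_{d,d} onto 𝒢_d. (ii) If (φ,ψ) ∈ 𝒢_{d,d} then τ∘ψ∘τ ∈ 𝒢_d, where τ : ℝ^d → ℝ^d is the involution x ↦ −x. (iii) Every φ ∈ 𝒢_d is of the form (x', x_d) ↦ (L(x'), A(x_d) + Q(x')) for some invertible affine endomorphism L of ℝ^{d−1}, some invertible affine endomorphism A of ℝ, and some polynomial Q : ℝ^{d−1} → ℝ of degree ≤ 2; the pair (L,A) is unrestricted, and Q takes the form Q = q + a where q is a homogeneous polynomial of degree 2 uniquely determined by (L,A), while a is an arbitrary affine mapping. -/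
open MeasureTheory Filter Set
open scoped ENNReal RealInnerProductSpace

noncomputable section

namespace RadonParaboloid

/-- `ℝ^{d-1}` as a Euclidean space. -/
abbrev Eh (d : ℕ) := EuclideanSpace ℝ (Fin (d - 1))

/-- `ℝ^d`, identified with `ℝ^{d-1} × ℝ`, with coordinates `x = (x', x_d)`. -/
abbrev E (d : ℕ) := Eh d × ℝ

/-- The Radon-like transform: convolution with the (affine) measure on the paraboloid
`{x_d = |x'|^2}`, i.e. `Tf(x) = ∫_{ℝ^{d-1}} f(x' - t, x_d - |t|^2) dt`. -/
def T (d : ℕ) (f : E d → ℝ) : E d → ℝ :=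
  fun x => ∫ t : Eh d, f (x.1 - t, x.2 - ‖t‖ ^ 2)

/-- The transpose of `T` : `T*g(y) = ∫_{ℝ^{d-1}} g(y' + t, y_d + |t|^2) dt`. -/
def Tstar (d : ℕ) (g : E d → ℝ) : E d → ℝ :=
  fun y => ∫ t : Eh d, g (y.1 + t, y.2 + ‖t‖ ^ 2)

/-- The exponent `p = (d+1)/d`, as an extended nonnegative real. -/
def pexp (d : ℕ) : ℝ≥0∞ := ENNReal.ofReal (((d : ℝ) + 1) / d)

/-- The exponent `q = d + 1`, as an extended nonnegative real. -/
def qexp (d : ℕ) : ℝ≥0∞ := (d : ℝ≥0∞) + 1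

/-- The exponent `p = (d+1)/d` as a real number. -/
def pR (d : ℕ) : ℝ := ((d : ℝ) + 1) / d

/-- The optimal constant `A` in the inequality `‖Tf‖_q ≤ A ‖f‖_p`. -/
def Aconst (d : ℕ) : ℝ≥0∞ :=
  ⨆ (f : E d → ℝ) (_ : 0 ≤ f) (_ : eLpNorm f (pexp d) volume = 1),
    eLpNorm (T d f) (qexp d) volume

/-- An extremizer: a nonnegative `f ∈ L^p` with `‖Tf‖_q = A ‖f‖_p ≠ 0`. -/
def IsExtremizer (d : ℕ) (f : E d → ℝ) : Prop :=
  0 ≤ f ∧ MemLp f (pexp d) volume ∧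
    eLpNorm (T d f) (qexp d) volume = Aconst d * eLpNorm f (pexp d) volume ∧
    eLpNorm f (pexp d) volume ≠ 0

/-- An extremizing sequence: nonnegative `f_ν ∈ L^p` with `‖f_ν‖_p = 1` and `‖T f_ν‖_q → A`. -/
def IsExtremizingSeq (d : ℕ) (f : ℕ → E d → ℝ) : Prop :=
  (∀ ν, 0 ≤ f ν) ∧ (∀ ν, MemLp (f ν) (pexp d) volume) ∧
    (∀ ν, eLpNorm (f ν) (pexp d) volume = 1) ∧
    Tendsto (fun ν => eLpNorm (T d (f ν)) (qexp d) volume) atTop (nhds (Aconst d))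

/-- `Θ(x,y) = x_d - y_d - |x' - y'|^2`. -/
def Theta (d : ℕ) (x y : E d) : ℝ := x.2 - y.2 - ‖x.1 - y.1‖ ^ 2

/-- A `C^∞` diffeomorphism of `ℝ^d`. -/
def IsSmoothDiffeo (d : ℕ) (φ : E d → E d) : Prop :=
  ∃ φinv : E d → E d, ContDiff ℝ (⊤ : ℕ∞) φ ∧ ContDiff ℝ (⊤ : ℕ∞) φinv ∧
    Function.LeftInverse φinv φ ∧ Function.RightInverse φinv φ

/-- The group `𝒢_{d,d}` of pairs of diffeomorphisms preserving the incidence relation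
in the strong sense `Θ(φ(x), ψ(y)) = λ Θ(x,y)`. -/
def Gdd (d : ℕ) : Set ((E d → E d) × (E d → E d)) :=
  { Φ | IsSmoothDiffeo d Φ.1 ∧ IsSmoothDiffeo d Φ.2 ∧
      ∃ lam : ℝ, lam ≠ 0 ∧ ∀ x y, Theta d (Φ.1 x) (Φ.2 y) = lam * Theta d x y }

/-- The symmetry group `𝒢_d`. -/
def Gd (d : ℕ) : Set (E d → E d) := { φ | ∃ ψ, (φ, ψ) ∈ Gdd d }

/-- The (constant) Jacobian determinant of `φ ∈ 𝒢_d`. -/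
def jac (d : ℕ) (φ : E d → E d) : ℝ :=
  |LinearMap.det (fderiv ℝ φ 0).toLinearMap|

/-- The action `φ* f(x) = f(φ(x)) J_φ^{d/(d+1)}` of a symmetry on functions. -/
def pullback (d : ℕ) (φ : E d → E d) (f : E d → ℝ) : E d → ℝ :=
  fun x => f (φ x) * jac d φ ^ ((d : ℝ) / ((d : ℝ) + 1))

/-- The data of a paraball: a point `z = (x̄, x̄⋆)` of the incidence manifold, an orthonormal
basis `e` of `ℝ^{d-1}`, radii `r`, and a height `ρ` (here called `rad`). -/
structure Paraball (d : ℕ) where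
  xb : E d
  xs : E d
  incid : xs.2 - xb.2 = ‖xs.1 - xb.1‖ ^ 2
  e : OrthonormalBasis (Fin (d - 1)) ℝ (Eh d)
  r : Fin (d - 1) → ℝ
  hr : ∀ j, 0 < r j
  rad : ℝ
  hrad : 0 < rad

/-- The paraball `B(z,e,r,ρ)` as a subset of `ℝ^d`. -/
def Paraball.carrier {d : ℕ} (B : Paraball d) : Set (E d) :=
  { x | (∑ j, ⟪x.1 - B.xb.1, B.e j⟫ ^ 2 / B.r j ^ 2) < 1 ∧
        |x.2 - B.xs.2 - ‖x.1 - B.xs.1‖ ^ 2| < B.rad }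

/-- The expanded paraball `λ B(z,e,r,ρ)`. -/
def Paraball.expanded {d : ℕ} (B : Paraball d) (lam : ℝ) : Set (E d) :=
  { x | (∑ j, ⟪x.1 - B.xb.1, B.e j⟫ ^ 2 / B.r j ^ 2) < lam ^ 2 ∧
        |x.2 - B.xs.2 - ‖x.1 - B.xs.1‖ ^ 2| < lam * B.rad }

/-- The balanced convex subset `𝒞 ⊆ ℝ^{d-1}` associated to a paraball. -/
def Paraball.cbody {d : ℕ} (B : Paraball d) : Set (Eh d) :=
  { v | (∑ j, ⟪v, B.e j⟫ ^ 2 / B.r j ^ 2) < 1 }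

/-- The quasidistance `ϱ` between two paraballs. -/
def varrho {d : ℕ} (B1 B2 : Paraball d) : ℝ :=
  max B1.rad B2.rad / min B1.rad B2.rad
  + sSup ((fun v => ∑ j, ⟪v, B2.e j⟫ ^ 2 / B2.r j ^ 2) '' B1.cbody)
  + sSup ((fun v => ∑ j, ⟪v, B1.e j⟫ ^ 2 / B1.r j ^ 2) '' B2.cbody)
  + ∑ j, ⟪B1.xb.1 - B2.xb.1, B1.e j⟫ ^ 2 / B1.r j ^ 2
  + ∑ j, ⟪B1.xb.1 - B2.xb.1, B2.e j⟫ ^ 2 / B2.r j ^ 2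
  + ∑ j, ⟪B1.xs.1 - B2.xs.1, B1.e j⟫ ^ 2 / (B1.rad / B1.r j) ^ 2
  + ∑ j, ⟪B1.xs.1 - B2.xs.1, B2.e j⟫ ^ 2 / (B2.rad / B2.r j) ^ 2
  + |B2.xb.2 - B1.xs.2 - ‖B2.xb.1 - B1.xs.1‖ ^ 2| / B1.rad
  + |B1.xb.2 - B2.xs.2 - ‖B1.xb.1 - B2.xs.1‖ ^ 2| / B2.rad

/-- A rough level set decomposition `f = Σ_{j∈ℤ} 2^j f_j`, `f_j ↔ E_j`. -/
def IsRoughDecomp (d : ℕ) (f : E d → ℝ) (fj : ℤ → E d → ℝ) (Ej : ℤ → Set (E d)) : Prop :=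
  (∀ j, MeasurableSet (Ej j)) ∧
  Pairwise (Function.onFun Disjoint Ej) ∧
  (∀ j, ∀ x, x ∉ Ej j → fj j x = 0) ∧
  (∀ j, ∀ᵐ x ∂(volume : Measure (E d)), x ∈ Ej j → 1 ≤ fj j x ∧ fj j x < 2) ∧
  (∀ x, f x = ∑' j : ℤ, (2 : ℝ) ^ j * fj j x)

/-- `‖g‖_{C^1} ≤ R`. -/
def C1NormLe (d : ℕ) (g : E d → ℝ) (R : ℝ) : Prop :=
  ContDiff ℝ 1 g ∧ ∀ x, |g x| ≤ R ∧ ‖fderiv ℝ g x‖ ≤ R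


variable {d : ℕ}

lemma inner_eq_zero_forall {w : Eh d} (h : ∀ v, ⟪w, v⟫ = 0) : w = 0 := by
  have := h w
  rwa [real_inner_self_eq_norm_sq, pow_eq_zero_iff (by norm_num), norm_eq_zero] at this

lemma theta_polar (x x' y y' : E d) :
    Theta d x y - Theta d x' y - Theta d x y' + Theta d x' y' =
      2 * ⟪x.1 - x'.1, y.1 - y'.1⟫ := by
  simp only [Theta, norm_sub_sq_real, inner_sub_left, inner_sub_right]
  ring

lemma contDiff_linear (M : Eh d →ₗ[ℝ] Eh d) : ContDiff ℝ (⊤ : ℕ∞) M := by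
  have := (LinearMap.toContinuousLinearMap M).contDiff (n := (⊤ : ℕ∞))
  simpa using this

lemma psi_unique {φ ψ ψ' : E d → E d} {lam lam' : ℝ} (hlam : lam ≠ 0)
    (φinv : E d → E d) (hri : Function.RightInverse φinv φ)
    (h1 : ∀ x y, Theta d (φ x) (ψ y) = lam * Theta d x y)
    (h2 : ∀ x y, Theta d (φ x) (ψ' y) = lam' * Theta d x y) : ψ = ψ' := by
  funext y
  have key : ∀ a : E d, lam' * Theta d a (ψ y) = lam * Theta d a (ψ' y) := by
    intro a
    have e1 := h1 (φinv a) y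
    have e2 := h2 (φinv a) y
    rw [hri a] at e1 e2
    rw [e1, e2]; ring
  set u := ψ y with hu
  set v := ψ' y with hv
  have hl : lam' = lam := by
    have k1 := key ((0 : Eh d), (1 : ℝ))
    have k0 := key ((0 : Eh d), (0 : ℝ))
    simp only [Theta] at k1 k0
    nlinarith [k1, k0]
  rw [hl] at key
  have key2 : ∀ a : E d, Theta d a u = Theta d a v := fun a =>
    mul_left_cancel₀ hlam (key a)
  have eu := key2 (u.1, 0)
  have ev := key2 (v.1, 0)
  simp only [Theta, sub_self, norm_zero, ne_eq, OfNat.ofNat_ne_zero,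
    not_false_eq_true, zero_pow, zero_sub, sub_zero] at eu ev
  have hsq : ‖u.1 - v.1‖ ^ 2 = ‖v.1 - u.1‖ ^ 2 := by rw [norm_sub_rev]
  have h11 : ‖u.1 - v.1‖ ^ 2 = 0 := by linarith
  have h1' : u.1 = v.1 := by
    have := pow_eq_zero_iff (n := 2) (by norm_num) |>.mp h11
    rw [norm_eq_zero, sub_eq_zero] at this; exact this
  have h2' : u.2 = v.2 := by
    rw [h1', sub_self, norm_zero] at eu
    simp at eu; linarith
  exact Prod.ext h1' h2'

lemma structure_of_Gd {φ : E d → E d} (h : φ ∈ Gd d) :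
    ∃ (L : Eh d ≃ᵃ[ℝ] Eh d) (α β : ℝ), α ≠ 0 ∧
      ∃ (q : Eh d → ℝ) (Bq : Eh d →ₗ[ℝ] Eh d →ₗ[ℝ] ℝ) (w : Eh d) (c : ℝ),
        (∀ v, q v = Bq v v) ∧
        φ = fun x : E d => (L x.1, α * x.2 + β + q x.1 + ⟪x.1, w⟫ + c) := by
  obtain ⟨ψ, ⟨φinv, hφs, hφis, hφl, hφr⟩, ⟨ψinv, hψs, hψis, hψl, hψr⟩, lam, hlam, hid⟩ := h
  dsimp only at hφs hφl hφr hψs hψl hψr hid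
  -- polarized key identity
  have key : ∀ x x' y y' : E d,
      ⟪(φ x).1 - (φ x').1, (ψ y).1 - (ψ y').1⟫ = lam * ⟪x.1 - x'.1, y.1 - y'.1⟫ := by
    intro x x' y y'
    have e := theta_polar (φ x) (φ x') (ψ y) (ψ y')
    have e' := theta_polar x x' y y'
    rw [hid x y, hid x' y, hid x y', hid x' y'] at e
    linear_combination (lam * e' - e) / 2
  set ρ : Eh d → Eh d := fun v => (ψinv (v + (ψ (0, 0)).1, 0)).1 with hρ
  have key2 : ∀ (x x' : E d) (v : Eh d),
      ⟪(φ x).1 - (φ x').1, v⟫ = lam * ⟪x.1 - x'.1, ρ v⟫ := by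
    intro x x' v
    have := key x x' (ψinv (v + (ψ (0, 0)).1, 0)) (0, 0)
    rw [hψr] at this
    simpa using this
  have hfst : ∀ x : E d, (φ x).1 = (φ (x.1, 0)).1 := by
    intro x
    have h0 : ∀ v, ⟪(φ x).1 - (φ (x.1, 0)).1, v⟫ = 0 := by
      intro v; rw [key2]; simp
    exact sub_eq_zero.mp (inner_eq_zero_forall h0)
  set f : Eh d → Eh d := fun u => (φ (u, 0)).1 with hf
  have keyf : ∀ (u u' : Eh d) (v : Eh d), ⟪f u - f u', v⟫ = lam * ⟪u - u', ρ v⟫ := by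
    intro u u' v
    simpa using key2 (u, 0) (u', 0) v
  have hadd : ∀ u u' : Eh d, (f (u + u') - f 0) = (f u - f 0) + (f u' - f 0) := by
    intro u u'
    have h0 : ∀ v, ⟪f (u + u') - f 0 - ((f u - f 0) + (f u' - f 0)), v⟫ = 0 := by
      intro v
      have hre : f (u + u') - f 0 - ((f u - f 0) + (f u' - f 0))
          = (f (u + u') - f u) - (f u' - f 0) := by abel
      rw [hre, inner_sub_left, keyf, keyf]
      simp
    exact sub_eq_zero.mp (inner_eq_zero_forall h0)
  have hsmul : ∀ (t : ℝ) (u : Eh d), (f (t • u) - f 0) = t • (f u - f 0) := by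
    intro t u
    have h0 : ∀ v, ⟪f (t • u) - f 0 - t • (f u - f 0), v⟫ = 0 := by
      intro v
      rw [inner_sub_left, real_inner_smul_left, keyf, keyf, sub_zero, sub_zero,
        real_inner_smul_left]
      ring
    exact sub_eq_zero.mp (inner_eq_zero_forall h0)
  set M : Eh d →ₗ[ℝ] Eh d :=
    { toFun := fun u => f u - f 0
      map_add' := hadd
      map_smul' := hsmul } with hM
  have hMapp : ∀ u, M u = f u - f 0 := fun _ => rfl
  have Minj : Function.Injective M := by
    have hz : ∀ a : Eh d, M a = 0 → a = 0 := by
      intro a hMa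
      apply inner_eq_zero_forall
      intro u
      have := key (a, 0) ((0 : Eh d), (0 : ℝ)) (u, 0) ((0 : Eh d), (0 : ℝ))
      have hfa : (φ (a, 0)).1 - (φ ((0 : Eh d), (0 : ℝ))).1 = M a := rfl
      rw [hfa, hMa, inner_zero_left] at this
      simp only [sub_zero] at this
      have := this.symm
      rcases mul_eq_zero.mp this with h | h
      · exact absurd h hlam
      · exact h
    intro a b hab
    have : a - b = 0 := hz _ (by rw [map_sub, hab, sub_self])
    exact sub_eq_zero.mp this
  have Msurj : Function.Surjective M := LinearMap.injective_iff_surjective.mp Minj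
  set Meq : Eh d ≃ₗ[ℝ] Eh d := LinearEquiv.ofBijective M ⟨Minj, Msurj⟩ with hMeq
  set L : Eh d ≃ᵃ[ℝ] Eh d :=
    Meq.toAffineEquiv.trans (AffineEquiv.constVAdd ℝ (Eh d) (f 0)) with hLdef
  have hL : ∀ u, L u = f u := by
    intro u
    show (f 0) +ᵥ (Meq u) = f u
    have : Meq u = f u - f 0 := rfl
    rw [this, vadd_eq_add]
    abel
  set h0v : Eh d := (ψ (0, 0)).1 with hh0v
  set K0 : ℝ := (ψ (0, 0)).2 with hK0
  set q : Eh d → ℝ := fun u => ‖M u‖ ^ 2 - lam * ‖u‖ ^ 2 with hqdef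
  set Bq : Eh d →ₗ[ℝ] Eh d →ₗ[ℝ] ℝ :=
    LinearMap.mk₂ ℝ (fun u v => ⟪M u, M v⟫ - lam * ⟪u, v⟫)
      (by intro u u' v; simp only [map_add, inner_add_left]; ring)
      (by intro t u v
          simp only [LinearMap.map_smul, real_inner_smul_left, smul_eq_mul]; ring)
      (by intro u v v'; simp only [map_add, inner_add_right]; ring)
      (by intro u t v
          simp only [LinearMap.map_smul, real_inner_smul_right, smul_eq_mul]; ring) with hBq
  set w : Eh d := (2 : ℝ) • (LinearMap.adjoint M) (f 0 - h0v) with hw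
  set c : ℝ := ‖f 0 - h0v‖ ^ 2 + K0 with hc
  refine ⟨L, lam, 0, hlam, q, Bq, w, c, ?_, ?_⟩
  · intro v
    simp only [hqdef, hBq, LinearMap.mk₂_apply, real_inner_self_eq_norm_sq]
  · funext x
    apply Prod.ext
    · show (φ x).1 = L x.1
      rw [hL, hfst x]
    · show (φ x).2 = lam * x.2 + 0 + q x.1 + ⟪x.1, w⟫ + c
      have e := hid x ((0 : Eh d), (0 : ℝ))
      simp only [Theta, sub_zero] at e
      have h1 : (φ x).1 - h0v = M x.1 + (f 0 - h0v) := by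
        rw [hMapp, hfst x]
        show f x.1 - h0v = f x.1 - f 0 + (f 0 - h0v)
        abel
      rw [h1, norm_add_sq_real] at e
      have hwx : ⟪x.1, w⟫ = 2 * ⟪M x.1, f 0 - h0v⟫ := by
        rw [hw, real_inner_smul_right, LinearMap.adjoint_inner_right]
      rw [hwx, hqdef, hc]
      simp only []
      linarith [e]

lemma affine_decomp (L : Eh d ≃ᵃ[ℝ] Eh d) (u : Eh d) : L u = L.linear u + L 0 := by
  have := L.map_vadd 0 u
  simpa [vadd_eq_add] using this

lemma mem_Gd_of_form (L : Eh d ≃ᵃ[ℝ] Eh d) (α β : ℝ) (hα : α ≠ 0) (w : Eh d) (c : ℝ) :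
    (fun x : E d => ((L x.1 : Eh d),
        α * x.2 + β + (‖(L.linear x.1 : Eh d)‖ ^ 2 - α * ‖x.1‖ ^ 2) + ⟪x.1, w⟫ + c))
      ∈ Gd d := by
  set A : Eh d →ₗ[ℝ] Eh d := (L.linear : Eh d →ₗ[ℝ] Eh d) with hA
  set b : Eh d := L 0 with hb
  set S : Eh d →ₗ[ℝ] Eh d := LinearMap.adjoint (L.linear.symm : Eh d →ₗ[ℝ] Eh d) with hS
  set adjA : Eh d →ₗ[ℝ] Eh d := LinearMap.adjoint A with hadjA
  have hinner : ∀ u z : Eh d, ⟪A u, S z⟫ = ⟪u, z⟫ := by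
    intro u z
    rw [hS, LinearMap.adjoint_inner_right]
    congr 1
    simp [hA, AffineEquiv.linear_symm, LinearEquiv.symm_apply_apply]
  have hAS : ∀ z, adjA (S z) = z := by
    intro z
    apply ext_inner_left ℝ
    intro v
    rw [hadjA, LinearMap.adjoint_inner_right, hinner]
  have hSA : ∀ z, S (adjA z) = z := by
    intro z
    apply ext_inner_left ℝ
    intro v
    rw [hS, LinearMap.adjoint_inner_right, hadjA, LinearMap.adjoint_inner_right]
    congr 1
    simp [hA, AffineEquiv.linear_symm, LinearEquiv.apply_symm_apply]
  set b2 : Eh d := b - (2⁻¹ : ℝ) • S w with hb2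
  set Hf : Eh d → Eh d := fun u => α • S u + b2 with hHf
  set ψ : E d → E d := fun y =>
    (Hf y.1, α * y.2 + α * ‖y.1‖ ^ 2 + β + c - ‖b - Hf y.1‖ ^ 2) with hψ
  set φ : E d → E d := fun x => ((L x.1 : Eh d),
      α * x.2 + β + (‖(L.linear x.1 : Eh d)‖ ^ 2 - α * ‖x.1‖ ^ 2) + ⟪x.1, w⟫ + c) with hφ
  have hLA : ∀ u : Eh d, L u = A u + b := fun u => affine_decomp L u
  -- smoothness helpers
  have hCA : ∀ (M : Eh d →ₗ[ℝ] Eh d), ContDiff ℝ (⊤ : ℕ∞) fun x : E d => M x.1 :=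
    fun M => (contDiff_linear M).comp contDiff_fst
  have hφsm : ContDiff ℝ (⊤ : ℕ∞) φ := by
    rw [hφ]
    apply ContDiff.prodMk
    · have : (fun x : E d => (L x.1 : Eh d)) = fun x : E d => A x.1 + b :=
        funext fun x => hLA x.1
      rw [this]
      exact (hCA A).add contDiff_const
    · have h1 : (fun x : E d => ‖(L.linear x.1 : Eh d)‖ ^ 2)
          = fun x : E d => ‖A x.1‖ ^ 2 := rfl
      refine ContDiff.add (ContDiff.add (ContDiff.add (ContDiff.add
        (contDiff_const.mul contDiff_snd) contDiff_const) ?_) ?_) contDiff_const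
      · exact ((hCA A).norm_sq ℝ).sub (contDiff_const.mul (contDiff_fst.norm_sq ℝ))
      · exact contDiff_fst.inner ℝ contDiff_const
  set g : E d → Eh d := fun z => (L.symm z.1 : Eh d) with hg
  have hgsm : ContDiff ℝ (⊤ : ℕ∞) g := by
    have : g = fun z : E d => (L.symm.linear : Eh d →ₗ[ℝ] Eh d) z.1 + L.symm 0 :=
      funext fun z => affine_decomp L.symm z.1
    rw [this]
    exact (hCA _).add contDiff_const
  set φinv : E d → E d := fun z => (g z,
      α⁻¹ * (z.2 - β - (‖(L.linear (g z) : Eh d)‖ ^ 2 - α * ‖g z‖ ^ 2) - ⟪g z, w⟫ - c))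
    with hφinv
  have hφinvsm : ContDiff ℝ (⊤ : ℕ∞) φinv := by
    rw [hφinv]
    apply ContDiff.prodMk hgsm
    have h2 : ContDiff ℝ (⊤ : ℕ∞) fun z : E d => (L.linear (g z) : Eh d) :=
      (contDiff_linear A).comp hgsm
    exact contDiff_const.mul ((((contDiff_snd.sub contDiff_const).sub
      ((h2.norm_sq ℝ).sub (contDiff_const.mul (hgsm.norm_sq ℝ)))).sub
      (hgsm.inner ℝ contDiff_const)).sub contDiff_const)
  have hφleft : Function.LeftInverse φinv φ := by
    intro x
    have hg1 : g (φ x) = x.1 := by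
      simp only [hg, hφ]
      exact L.symm_apply_apply x.1
    apply Prod.ext
    · exact hg1
    · show α⁻¹ * ((φ x).2 - β - (‖(L.linear (g (φ x)) : Eh d)‖ ^ 2
          - α * ‖g (φ x)‖ ^ 2) - ⟪g (φ x), w⟫ - c) = x.2
      rw [hg1]
      show α⁻¹ * ((α * x.2 + β + (‖(L.linear x.1 : Eh d)‖ ^ 2 - α * ‖x.1‖ ^ 2)
          + ⟪x.1, w⟫ + c) - β - (‖(L.linear x.1 : Eh d)‖ ^ 2 - α * ‖x.1‖ ^ 2)
          - ⟪x.1, w⟫ - c) = x.2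
      field_simp
      ring
  have hφright : Function.RightInverse φinv φ := by
    intro z
    have hg1 : (L (g z) : Eh d) = z.1 := L.apply_symm_apply z.1
    apply Prod.ext
    · exact hg1
    · show α * (φinv z).2 + β + (‖(L.linear (g z) : Eh d)‖ ^ 2 - α * ‖g z‖ ^ 2)
          + ⟪g z, w⟫ + c = z.2
      show α * (α⁻¹ * (z.2 - β - (‖(L.linear (g z) : Eh d)‖ ^ 2 - α * ‖g z‖ ^ 2)
          - ⟪g z, w⟫ - c)) + β + (‖(L.linear (g z) : Eh d)‖ ^ 2 - α * ‖g z‖ ^ 2)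
          + ⟪g z, w⟫ + c = z.2
      field_simp
      ring
  -- ψ data
  have hHsm : ContDiff ℝ (⊤ : ℕ∞) fun y : E d => Hf y.1 := by
    have : (fun y : E d => Hf y.1) = fun y : E d => α • S y.1 + b2 := rfl
    rw [this]
    exact ((hCA S).const_smul α).add contDiff_const
  have hψsm : ContDiff ℝ (⊤ : ℕ∞) ψ := by
    rw [hψ]
    apply ContDiff.prodMk hHsm
    exact ((((contDiff_const.mul contDiff_snd).add
      (contDiff_const.mul (contDiff_fst.norm_sq ℝ))).add contDiff_const).add
      contDiff_const).sub ((contDiff_const.sub hHsm).norm_sq ℝ)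
  set Hinv : Eh d → Eh d := fun u => α⁻¹ • adjA (u - b2) with hHinv
  have hHIsm : ContDiff ℝ (⊤ : ℕ∞) fun z : E d => Hinv z.1 :=
    (((contDiff_linear adjA).comp (contDiff_fst.sub contDiff_const)).const_smul α⁻¹)
  have hHfInv : ∀ u, Hinv (Hf u) = u := by
    intro u
    simp only [hHinv, hHf, add_sub_cancel_right, _root_.map_smul, hAS, smul_smul,
      inv_mul_cancel₀ hα, one_smul]
  have hHfInv' : ∀ u, Hf (Hinv u) = u := by
    intro u
    simp only [hHinv, hHf, _root_.map_smul, hSA, smul_smul, mul_inv_cancel₀ hα, one_smul]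
    abel
  set ψinv : E d → E d := fun z => (Hinv z.1,
      α⁻¹ * (z.2 - (α * ‖Hinv z.1‖ ^ 2 + β + c - ‖b - z.1‖ ^ 2))) with hψinv
  have hψinvsm : ContDiff ℝ (⊤ : ℕ∞) ψinv := by
    rw [hψinv]
    apply ContDiff.prodMk hHIsm
    exact contDiff_const.mul (contDiff_snd.sub ((((contDiff_const.mul
      (hHIsm.norm_sq ℝ)).add contDiff_const).add contDiff_const).sub
      ((contDiff_const.sub contDiff_fst).norm_sq ℝ)))
  have hψleft : Function.LeftInverse ψinv ψ := by
    intro y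
    apply Prod.ext
    · exact hHfInv y.1
    · show α⁻¹ * ((ψ y).2 - (α * ‖Hinv (ψ y).1‖ ^ 2 + β + c - ‖b - (ψ y).1‖ ^ 2)) = y.2
      have h1 : (ψ y).1 = Hf y.1 := rfl
      have h2 : (ψ y).2 = α * y.2 + α * ‖y.1‖ ^ 2 + β + c - ‖b - Hf y.1‖ ^ 2 := rfl
      rw [h1, h2, hHfInv y.1]
      field_simp
      ring
  have hψright : Function.RightInverse ψinv ψ := by
    intro z
    apply Prod.ext
    · exact hHfInv' z.1
    · show α * (ψinv z).2 + α * ‖(ψinv z).1‖ ^ 2 + β + c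
          - ‖b - Hf (ψinv z).1‖ ^ 2 = z.2
      have h1 : (ψinv z).1 = Hinv z.1 := rfl
      have h2 : (ψinv z).2
          = α⁻¹ * (z.2 - (α * ‖Hinv z.1‖ ^ 2 + β + c - ‖b - z.1‖ ^ 2)) := rfl
      rw [h1, h2, hHfInv' z.1]
      field_simp
      ring
  -- the incidence identity
  have hident : ∀ x y, Theta d (φ x) (ψ y) = α * Theta d x y := by
    intro x y
    set D : Eh d := α • S y.1 - (2⁻¹ : ℝ) • S w with hD
    have hdiff : (L x.1 : Eh d) - Hf y.1 = A x.1 - D := by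
      rw [hLA x.1]
      show A x.1 + b - (α • S y.1 + (b - (2⁻¹ : ℝ) • S w)) = A x.1 - D
      rw [hD]; abel
    have hbH : b - Hf y.1 = -D := by
      show b - (α • S y.1 + (b - (2⁻¹ : ℝ) • S w)) = -D
      rw [hD]; abel
    have hcross : ⟪A x.1, D⟫ = α * ⟪x.1, y.1⟫ - 2⁻¹ * ⟪x.1, w⟫ := by
      rw [hD, inner_sub_right, real_inner_smul_right, real_inner_smul_right,
        hinner, hinner]
    have e1 : Theta d (φ x) (ψ y) = (α * x.2 + β + (‖A x.1‖ ^ 2 - α * ‖x.1‖ ^ 2)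
        + ⟪x.1, w⟫ + c) - (α * y.2 + α * ‖y.1‖ ^ 2 + β + c - ‖D‖ ^ 2)
        - ‖A x.1 - D‖ ^ 2 := by
      show (α * x.2 + β + (‖(L.linear x.1 : Eh d)‖ ^ 2 - α * ‖x.1‖ ^ 2)
          + ⟪x.1, w⟫ + c) - (α * y.2 + α * ‖y.1‖ ^ 2 + β + c - ‖b - Hf y.1‖ ^ 2)
          - ‖(L x.1 : Eh d) - Hf y.1‖ ^ 2 = _
      rw [hdiff, hbH, norm_neg]
      rfl
    rw [e1, norm_sub_sq_real (A x.1) D, hcross]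
    simp only [Theta, norm_sub_sq_real]
    ring
  exact ⟨ψ, ⟨φinv, hφsm, hφinvsm, hφleft, hφright⟩,
    ⟨ψinv, hψsm, hψinvsm, hψleft, hψright⟩, α, hα, hident⟩

lemma exists_Bq (A : Eh d →ₗ[ℝ] Eh d) (α : ℝ) :
    ∃ Bq : Eh d →ₗ[ℝ] Eh d →ₗ[ℝ] ℝ, ∀ v, ‖A v‖ ^ 2 - α * ‖v‖ ^ 2 = Bq v v := by
  refine ⟨LinearMap.mk₂ ℝ (fun u v => ⟪A u, A v⟫ - α * ⟪u, v⟫)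
    (by intro u u' v; simp only [map_add, inner_add_left]; ring)
    (by intro t u v
        simp only [LinearMap.map_smul, real_inner_smul_left, smul_eq_mul]; ring)
    (by intro u v v'; simp only [map_add, inner_add_right]; ring)
    (by intro u t v
        simp only [LinearMap.map_smul, real_inner_smul_right, smul_eq_mul]; ring), ?_⟩
  intro v
  simp only [LinearMap.mk₂_apply, real_inner_self_eq_norm_sq]

lemma q_unique (L : Eh d ≃ᵃ[ℝ] Eh d) (α β : ℝ) (hα : α ≠ 0)
    {q' : Eh d → ℝ} (Bq' : Eh d →ₗ[ℝ] Eh d →ₗ[ℝ] ℝ) (hq' : ∀ v, q' v = Bq' v v)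
    (hmem : (fun x : E d => ((L x.1 : Eh d),
        α * x.2 + β + q' x.1 + ⟪x.1, (0 : Eh d)⟫ + 0)) ∈ Gd d) :
    ∀ u, q' u = ‖(L.linear u : Eh d)‖ ^ 2 - α * ‖u‖ ^ 2 := by
  obtain ⟨ψ', hφd, hψd, lam', hlam', hid'⟩ := hmem
  dsimp only at hid'
  -- α = lam'
  have e1 := hid' ((0 : Eh d), (1 : ℝ)) ((0 : Eh d), (0 : ℝ))
  have e0 := hid' ((0 : Eh d), (0 : ℝ)) ((0 : Eh d), (0 : ℝ))
  simp only [Theta] at e1 e0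
  have hαl : lam' = α := by
    simp only [sub_zero, sub_self, norm_zero] at e1 e0
    nlinarith [e1, e0]
  set h0' : Eh d := (ψ' ((0 : Eh d), (0 : ℝ))).1 with hh0'
  set K0' : ℝ := (ψ' ((0 : Eh d), (0 : ℝ))).2 with hK0'
  set k : Eh d := L 0 - h0' with hk
  have hQ : ∀ u : Eh d, q' u - (‖(L.linear u : Eh d)‖ ^ 2 - α * ‖u‖ ^ 2)
      = 2 * ⟪(L.linear u : Eh d), k⟫ + (‖k‖ ^ 2 + K0' - β) := by
    intro u
    have e := hid' (u, (0 : ℝ)) ((0 : Eh d), (0 : ℝ))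
    simp only [Theta, hαl] at e
    have hLu : (L u : Eh d) - h0' = (L.linear u : Eh d) + k := by
      rw [affine_decomp L u, hk]; abel
    rw [hLu, norm_add_sq_real] at e
    simp only [inner_zero_right, sub_zero, sub_self, norm_zero] at e
    nlinarith [e]
  have hC : (‖k‖ ^ 2 + K0' - β) = 0 := by
    have := hQ 0
    simp only [hq' 0, map_zero, LinearMap.zero_apply, LinearEquiv.map_zero,
      inner_zero_left, norm_zero] at this
    linarith [this]
  intro u
  have hQu := hQ u
  have hQn := hQ (-u)
  have hqeven : q' (-u) = q' u := by
    simp only [hq', map_neg, LinearMap.neg_apply, neg_neg]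
  have hLneg : ((L.linear (-u) : Eh d)) = -(L.linear u : Eh d) := map_neg _ _
  rw [hqeven, hLneg, inner_neg_left, norm_neg, norm_neg] at hQn
  linarith [hQu, hQn, hC]

/-- Structure of the symmetry groups: (i) `(φ,ψ) ↦ φ` is a bijection of `𝒢_{d,d}` with `𝒢_d`;
(ii) if `(φ,ψ) ∈ 𝒢_{d,d}` then `τ∘ψ∘τ ∈ 𝒢_d`; (iii) every `φ ∈ 𝒢_d` has the form
`(x',x_d) ↦ (L x', A x_d + Q(x'))` with `L` an invertible affine endomorphism of `ℝ^{d-1}`,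
`A` an invertible affine endomorphism of `ℝ`, and `Q` a polynomial of degree at most `2`,
whose homogeneous quadratic part is uniquely determined by `(L,A)` while its affine part
is arbitrary. -/
theorem symmetry_group_structure (d : ℕ) (hd : 2 ≤ d) :
    (∀ Φ ∈ Gdd d, Φ.1 ∈ Gd d) ∧
    (∀ φ ∈ Gd d, ∃! ψ : E d → E d, (φ, ψ) ∈ Gdd d) ∧
    (∀ Φ ∈ Gdd d, (fun x : E d => -Φ.2 (-x)) ∈ Gd d) ∧
    (∀ φ ∈ Gd d, ∃ (L : Eh d ≃ᵃ[ℝ] Eh d) (α β : ℝ), α ≠ 0 ∧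
      ∃ (q : Eh d → ℝ) (Bq : Eh d →ₗ[ℝ] Eh d →ₗ[ℝ] ℝ) (w : Eh d) (c : ℝ),
        (∀ v, q v = Bq v v) ∧
        φ = fun x : E d => (L x.1, α * x.2 + β + q x.1 + ⟪x.1, w⟫ + c)) ∧
    (∀ (L : Eh d ≃ᵃ[ℝ] Eh d) (α β : ℝ), α ≠ 0 →
      ∃! q : Eh d → ℝ, (∃ Bq : Eh d →ₗ[ℝ] Eh d →ₗ[ℝ] ℝ, ∀ v, q v = Bq v v) ∧
        ∀ (w : Eh d) (c : ℝ),
          (fun x : E d => (L x.1, α * x.2 + β + q x.1 + ⟪x.1, w⟫ + c)) ∈ Gd d) := by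
  refine ⟨?_, ?_, ?_, ?_, ?_⟩
  · -- (i) forward map
    intro Φ hΦ
    exact ⟨Φ.2, by simpa using hΦ⟩
  · -- (i) uniqueness of ψ
    intro φ hφ
    obtain ⟨ψ, hψ⟩ := hφ
    refine ⟨ψ, hψ, ?_⟩
    intro ψ' hψ'
    obtain ⟨⟨φinv, hφs, hφis, hφl, hφr⟩, hd2, lam, hlam, hid⟩ := hψ
    obtain ⟨hd1', hd2', lam', hlam', hid'⟩ := hψ'
    dsimp only at hid hid' hφr
    exact psi_unique hlam' φinv hφr hid' hid
  · -- (ii)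
    intro Φ hΦ
    obtain ⟨⟨φinv, hφs, hφis, hφl, hφr⟩, ⟨ψinv, hψs, hψis, hψl, hψr⟩, lam, hlam, hid⟩ := hΦ
    have hswap : ∀ a b : E d, Theta d (-b) (-a) = Theta d a b := by
      intro a b
      simp only [Theta, Prod.fst_neg, Prod.snd_neg, neg_sub_neg]
    refine ⟨fun y => -Φ.1 (-y),
      ⟨fun x => -ψinv (-x), (hψs.comp contDiff_neg).neg, (hψis.comp contDiff_neg).neg,
        ?_, ?_⟩,
      ⟨fun y => -φinv (-y), (hφs.comp contDiff_neg).neg, (hφis.comp contDiff_neg).neg,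
        ?_, ?_⟩, lam, hlam, ?_⟩
    · intro x; dsimp only; rw [neg_neg, hψl (-x), neg_neg]
    · intro x; dsimp only; rw [neg_neg, hψr (-x), neg_neg]
    · intro x; dsimp only; rw [neg_neg, hφl (-x), neg_neg]
    · intro x; dsimp only; rw [neg_neg, hφr (-x), neg_neg]
    · intro x y
      dsimp only
      rw [hswap (Φ.1 (-y)) (Φ.2 (-x)), hid (-y) (-x), hswap x y]
  · -- (iii) structure
    intro φ hφ
    exact structure_of_Gd hφ
  · -- (iii) uniqueness of q
    intro L α β hα
    obtain ⟨Bq, hBq⟩ := exists_Bq (L.linear : Eh d →ₗ[ℝ] Eh d) α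
    refine ⟨fun u => ‖(L.linear u : Eh d)‖ ^ 2 - α * ‖u‖ ^ 2,
      ⟨⟨Bq, fun v => hBq v⟩, fun w c => mem_Gd_of_form L α β hα w c⟩, ?_⟩
    intro q' ⟨⟨Bq', hBq'⟩, hmem⟩
    funext u
    exact q_unique L α β hα Bq' hBq' (hmem 0 0) u

end RadonParaboloid
end
end

section
/- There exists a constant C < ∞, depending only on the dimension d, such that for any three paraballs B♯, B♮, B♭, the quasi-triangle inequality ϱ(B♯,B♭) ≤ C ϱ(B♯,B♮)^C + C ϱ(B♮,B♭)^C holds. -/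
open MeasureTheory Filter Set
open scoped ENNReal RealInnerProductSpace

noncomputable section

namespace RadonParaboloid

/-! ### Quadratic forms associated to a paraball -/

variable {d : ℕ}

/-- The quadratic form `Q_B(v) = ∑ ⟪v, e j⟫² / r j²`. -/
def Qf (B : Paraball d) (v : Eh d) : ℝ := ∑ j, ⟪v, B.e j⟫ ^ 2 / B.r j ^ 2

/-- The starred quadratic form `Q*_B(v) = ∑ ⟪v, e j⟫² / (ρ/r j)²`. -/
def QS (B : Paraball d) (v : Eh d) : ℝ := ∑ j, ⟪v, B.e j⟫ ^ 2 / (B.rad / B.r j) ^ 2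

/-- The map `L_B v = ∑ (r j * ⟪v, e j⟫) • e j`. -/
def Lf (B : Paraball d) (v : Eh d) : Eh d := ∑ j, (B.r j * ⟪v, B.e j⟫) • B.e j

/-- The map `M_B v = ∑ (r j⁻¹ * ⟪v, e j⟫) • e j`. -/
def Mf (B : Paraball d) (v : Eh d) : Eh d := ∑ j, ((B.r j)⁻¹ * ⟪v, B.e j⟫) • B.e j

def sQ (B1 B2 : Paraball d) : ℝ :=
  sSup ((fun v => ∑ j, ⟪v, B2.e j⟫ ^ 2 / B2.r j ^ 2) '' B1.cbody)

lemma sQ_def (B1 B2 : Paraball d) : sQ B1 B2 = sSup ((Qf B2) '' B1.cbody) := rfl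

lemma varrho_eq (B1 B2 : Paraball d) :
    varrho B1 B2 = max B1.rad B2.rad / min B1.rad B2.rad
      + sQ B1 B2 + sQ B2 B1
      + Qf B1 (B1.xb.1 - B2.xb.1) + Qf B2 (B1.xb.1 - B2.xb.1)
      + QS B1 (B1.xs.1 - B2.xs.1) + QS B2 (B1.xs.1 - B2.xs.1)
      + |B2.xb.2 - B1.xs.2 - ‖B2.xb.1 - B1.xs.1‖ ^ 2| / B1.rad
      + |B1.xb.2 - B2.xs.2 - ‖B1.xb.1 - B2.xs.1‖ ^ 2| / B2.rad := rfl

lemma mem_cbody {B : Paraball d} {v : Eh d} : v ∈ B.cbody ↔ Qf B v < 1 := Iff.rfl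

lemma Qf_nonneg (B : Paraball d) (v : Eh d) : 0 ≤ Qf B v :=
  Finset.sum_nonneg fun j _ => div_nonneg (sq_nonneg _) (sq_nonneg _)

lemma QS_nonneg (B : Paraball d) (v : Eh d) : 0 ≤ QS B v :=
  Finset.sum_nonneg fun j _ => div_nonneg (sq_nonneg _) (sq_nonneg _)

lemma Qf_zero (B : Paraball d) : Qf B 0 = 0 := by
  simp [Qf]

lemma zero_mem_cbody (B : Paraball d) : (0 : Eh d) ∈ B.cbody := by
  rw [mem_cbody, Qf_zero]; norm_num

lemma inner_sum_smul (B : Paraball d) (c : Fin (d-1) → ℝ) (k : Fin (d-1)) :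
    ⟪∑ j, c j • B.e j, B.e k⟫ = c k := by
  rw [sum_inner]
  rw [Finset.sum_eq_single k]
  · rw [real_inner_smul_left, (orthonormal_iff_ite.mp B.e.orthonormal) k k]
    simp
  · intro j _ hj
    rw [real_inner_smul_left, (orthonormal_iff_ite.mp B.e.orthonormal) j k]
    simp [hj]
  · simp

lemma inner_Lf (B : Paraball d) (v : Eh d) (k : Fin (d-1)) :
    ⟪Lf B v, B.e k⟫ = B.r k * ⟪v, B.e k⟫ := inner_sum_smul B _ k

lemma inner_Mf (B : Paraball d) (v : Eh d) (k : Fin (d-1)) :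
    ⟪Mf B v, B.e k⟫ = (B.r k)⁻¹ * ⟪v, B.e k⟫ := inner_sum_smul B _ k

lemma sum_repr (B : Paraball d) (v : Eh d) : ∑ j, ⟪v, B.e j⟫ • B.e j = v := by
  calc (∑ j, ⟪v, B.e j⟫ • B.e j) = ∑ j, ⟪B.e j, v⟫ • B.e j := by
        refine Finset.sum_congr rfl fun j _ => by rw [real_inner_comm]
    _ = v := B.e.sum_repr' v

lemma norm_sq_sum_smul (B : Paraball d) (c : Fin (d-1) → ℝ) :
    ‖∑ j, c j • B.e j‖ ^ 2 = ∑ j, (c j) ^ 2 := by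
  rw [← real_inner_self_eq_norm_sq, sum_inner]
  congr 1
  ext j
  rw [real_inner_smul_left, real_inner_comm, inner_sum_smul B c j, sq]

lemma Lf_Mf (B : Paraball d) (v : Eh d) : Lf B (Mf B v) = v := by
  unfold Lf
  have h : ∀ k : Fin (d-1), B.r k * ⟪Mf B v, B.e k⟫ = ⟪v, B.e k⟫ := by
    intro k; rw [inner_Mf, ← mul_assoc, mul_inv_cancel₀ (B.hr k).ne', one_mul]
  calc (∑ j, (B.r j * ⟪Mf B v, B.e j⟫) • B.e j) = ∑ j, ⟪v, B.e j⟫ • B.e j := by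
        refine Finset.sum_congr rfl fun j _ => by rw [h]
    _ = v := sum_repr B v

lemma Mf_Lf (B : Paraball d) (v : Eh d) : Mf B (Lf B v) = v := by
  unfold Mf
  have h : ∀ k : Fin (d-1), (B.r k)⁻¹ * ⟪Lf B v, B.e k⟫ = ⟪v, B.e k⟫ := by
    intro k; rw [inner_Lf, ← mul_assoc, inv_mul_cancel₀ (B.hr k).ne', one_mul]
  calc (∑ j, ((B.r j)⁻¹ * ⟪Lf B v, B.e j⟫) • B.e j) = ∑ j, ⟪v, B.e j⟫ • B.e j := by
        refine Finset.sum_congr rfl fun j _ => by rw [h]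
    _ = v := sum_repr B v

lemma Qf_eq_norm_Mf (B : Paraball d) (v : Eh d) : Qf B v = ‖Mf B v‖ ^ 2 := by
  unfold Mf
  rw [norm_sq_sum_smul]
  refine Finset.sum_congr rfl fun j _ => ?_
  rw [mul_pow, inv_pow, div_eq_inv_mul]

lemma norm_Lf_sq (B : Paraball d) (v : Eh d) :
    ‖Lf B v‖ ^ 2 = ∑ j, (B.r j * ⟪v, B.e j⟫) ^ 2 := by
  unfold Lf; rw [norm_sq_sum_smul]

lemma QS_eq (B : Paraball d) (v : Eh d) : QS B v = ‖Lf B v‖ ^ 2 / B.rad ^ 2 := by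
  rw [norm_Lf_sq, Finset.sum_div]
  refine Finset.sum_congr rfl fun j _ => ?_
  have hr := (B.hr j).ne'
  have hrad := B.hrad.ne'
  field_simp

lemma Lf_selfadj (B : Paraball d) (u v : Eh d) : ⟪Lf B u, v⟫ = ⟪u, Lf B v⟫ := by
  have h : ∀ w z : Eh d, ⟪Lf B w, z⟫ = ∑ j, B.r j * (⟪w, B.e j⟫ * ⟪z, B.e j⟫) := by
    intro w z
    unfold Lf
    rw [sum_inner]
    refine Finset.sum_congr rfl fun j _ => by
      rw [real_inner_smul_left, real_inner_comm (B.e j) z]; ring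
  rw [h, real_inner_comm, h]
  refine Finset.sum_congr rfl fun j _ => by ring

lemma Mf_selfadj (B : Paraball d) (u v : Eh d) : ⟪Mf B u, v⟫ = ⟪u, Mf B v⟫ := by
  have h : ∀ w z : Eh d, ⟪Mf B w, z⟫ = ∑ j, (B.r j)⁻¹ * (⟪w, B.e j⟫ * ⟪z, B.e j⟫) := by
    intro w z
    unfold Mf
    rw [sum_inner]
    refine Finset.sum_congr rfl fun j _ => by
      rw [real_inner_smul_left, real_inner_comm (B.e j) z]; ring
  rw [h, real_inner_comm, h]
  refine Finset.sum_congr rfl fun j _ => by ring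

lemma Qf_smul (B : Paraball d) (c : ℝ) (v : Eh d) : Qf B (c • v) = c ^ 2 * Qf B v := by
  unfold Qf
  rw [Finset.mul_sum]
  refine Finset.sum_congr rfl fun j _ => by
    rw [real_inner_smul_left, mul_pow, mul_div_assoc]

lemma parseval (B : Paraball d) (v : Eh d) : ‖v‖ ^ 2 = ∑ j, ⟪v, B.e j⟫ ^ 2 := by
  conv_lhs => rw [← sum_repr B v]
  rw [norm_sq_sum_smul]

/-- Sublinearity: `Q(x - z) ≤ 2 Q(x-y) + 2 Q(y-z)`. -/
lemma Qf_sub_le (B : Paraball d) (x y z : Eh d) :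
    Qf B (x - z) ≤ 2 * Qf B (x - y) + 2 * Qf B (y - z) := by
  unfold Qf
  rw [Finset.mul_sum, Finset.mul_sum, ← Finset.sum_add_distrib]
  refine Finset.sum_le_sum fun j _ => ?_
  have hx : x - z = (x - y) + (y - z) := by abel
  rw [hx, inner_add_left]
  have hr : (0:ℝ) < B.r j ^ 2 := pow_pos (B.hr j) 2
  rw [show 2 * (⟪x - y, B.e j⟫ ^ 2 / B.r j ^ 2) + 2 * (⟪y - z, B.e j⟫ ^ 2 / B.r j ^ 2)
      = (2 * ⟪x - y, B.e j⟫ ^ 2 + 2 * ⟪y - z, B.e j⟫ ^ 2) / B.r j ^ 2 by ring]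
  refine (div_le_div_iff_of_pos_right hr).mpr ?_
  nlinarith [sq_nonneg (⟪x - y, B.e j⟫ - ⟪y - z, B.e j⟫)]

lemma norm_Lf_sub_le (B : Paraball d) (x y z : Eh d) :
    ‖Lf B (x - z)‖ ^ 2 ≤ 2 * ‖Lf B (x - y)‖ ^ 2 + 2 * ‖Lf B (y - z)‖ ^ 2 := by
  rw [norm_Lf_sq, norm_Lf_sq, norm_Lf_sq, Finset.mul_sum, Finset.mul_sum,
    ← Finset.sum_add_distrib]
  refine Finset.sum_le_sum fun j _ => ?_
  have hx : x - z = (x - y) + (y - z) := by abel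
  rw [hx, inner_add_left]
  nlinarith [sq_nonneg (B.r j * ⟪x - y, B.e j⟫ - B.r j * ⟪y - z, B.e j⟫)]

/-! ### sSup facts -/

lemma bddAbove_Qf_image (B1 B2 : Paraball d) : BddAbove ((Qf B2) '' B1.cbody) := by
  refine ⟨(∑ j, B1.r j ^ 2) * (∑ j, (B2.r j ^ 2)⁻¹), ?_⟩
  rintro x ⟨v, hv, rfl⟩
  rw [mem_cbody] at hv
  have hnorm : ‖v‖ ^ 2 ≤ ∑ j, B1.r j ^ 2 := by
    rw [parseval B1 v]
    refine Finset.sum_le_sum fun j _ => ?_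
    have hj : ⟪v, B1.e j⟫ ^ 2 / B1.r j ^ 2 ≤ 1 := by
      refine le_trans (Finset.single_le_sum (f := fun j => ⟪v, B1.e j⟫ ^ 2 / B1.r j ^ 2)
        (fun j _ => div_nonneg (sq_nonneg _) (sq_nonneg _)) (Finset.mem_univ j)) hv.le
    have hrj : (0:ℝ) < B1.r j ^ 2 := pow_pos (B1.hr j) 2
    calc ⟪v, B1.e j⟫ ^ 2 = (⟪v, B1.e j⟫ ^ 2 / B1.r j ^ 2) * B1.r j ^ 2 := (div_mul_cancel₀ _ hrj.ne').symm
      _ ≤ 1 * B1.r j ^ 2 := by apply mul_le_mul_of_nonneg_right hj hrj.le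
      _ = B1.r j ^ 2 := one_mul _
  have h2 : Qf B2 v ≤ ‖v‖ ^ 2 * ∑ j, (B2.r j ^ 2)⁻¹ := by
    rw [Finset.mul_sum]
    refine Finset.sum_le_sum fun j _ => ?_
    rw [div_eq_mul_inv]
    refine mul_le_mul_of_nonneg_right ?_ (by positivity)
    calc ⟪v, B2.e j⟫ ^ 2 ≤ ‖v‖ ^ 2 * ‖B2.e j‖ ^ 2 := by
          have := abs_real_inner_le_norm v (B2.e j)
          nlinarith [abs_nonneg ⟪v, B2.e j⟫, sq_abs ⟪v, B2.e j⟫]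
      _ = ‖v‖ ^ 2 := by rw [B2.e.orthonormal.1 j]; norm_num
  refine h2.trans ?_
  refine mul_le_mul_of_nonneg_right hnorm ?_
  exact Finset.sum_nonneg fun j _ => by positivity

lemma Qf_le_sQ {B1 B2 : Paraball d} {v : Eh d} (hv : v ∈ B1.cbody) :
    Qf B2 v ≤ sQ B1 B2 :=
  le_csSup (bddAbove_Qf_image B1 B2) ⟨v, hv, rfl⟩

lemma sQ_nonneg (B1 B2 : Paraball d) : 0 ≤ sQ B1 B2 := by
  have := Qf_le_sQ (B1 := B1) (B2 := B2) (zero_mem_cbody B1)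
  rw [Qf_zero] at this
  exact this

/-- Pointwise comparison: `Q₂(v) ≤ sQ₁₂ · Q₁(v)`. -/
lemma Qf_le_mul (B1 B2 : Paraball d) (v : Eh d) :
    Qf B2 v ≤ sQ B1 B2 * Qf B1 v := by
  have key : ∀ c : ℝ, Qf B1 v < c → Qf B2 v ≤ c * sQ B1 B2 := by
    intro c hc
    have hc0 : 0 < c := lt_of_le_of_lt (Qf_nonneg B1 v) hc
    set w := (Real.sqrt c)⁻¹ • v with hw
    have hs : Real.sqrt c ^ 2 = c := Real.sq_sqrt hc0.le
    have hs0 : (0:ℝ) < Real.sqrt c := Real.sqrt_pos.mpr hc0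
    have hQw : Qf B1 w = Qf B1 v / c := by
      rw [hw, Qf_smul, inv_pow, hs, inv_mul_eq_div]
    have hwmem : w ∈ B1.cbody := by
      rw [mem_cbody, hQw, div_lt_one hc0]; exact hc
    have h2 : Qf B2 w ≤ sQ B1 B2 := Qf_le_sQ hwmem
    have hQ2w : Qf B2 w = Qf B2 v / c := by
      rw [hw, Qf_smul, inv_pow, hs, inv_mul_eq_div]
    rw [hQ2w, div_le_iff₀ hc0] at h2
    linarith [h2]
  by_contra hcon
  push_neg at hcon
  set s := sQ B1 B2
  set t := Qf B1 v
  have hs0 : 0 ≤ s := sQ_nonneg B1 B2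
  have hgap : 0 < Qf B2 v - s * t := by linarith
  have hsp : (0:ℝ) < s + 1 := by linarith
  have hdiv : 0 < (Qf B2 v - s * t) / (s + 1) := div_pos hgap hsp
  have hc := key (t + (Qf B2 v - s * t) / (s + 1)) (by linarith)
  have h1 : (Qf B2 v - s * t) / (s + 1) * s < Qf B2 v - s * t := by
    rw [div_mul_eq_mul_div, div_lt_iff₀ hsp]
    nlinarith
  nlinarith

/-- Submultiplicativity of `sQ`. -/
lemma sQ_mul (B1 B2 B3 : Paraball d) : sQ B1 B3 ≤ sQ B1 B2 * sQ B2 B3 := by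
  rw [sQ_def B1 B3]
  refine csSup_le ⟨Qf B3 0, 0, zero_mem_cbody B1, rfl⟩ ?_
  rintro x ⟨v, hv, rfl⟩
  calc Qf B3 v ≤ sQ B2 B3 * Qf B2 v := Qf_le_mul B2 B3 v
    _ ≤ sQ B2 B3 * (sQ B1 B2 * Qf B1 v) :=
        mul_le_mul_of_nonneg_left (Qf_le_mul B1 B2 v) (sQ_nonneg B2 B3)
    _ ≤ sQ B2 B3 * (sQ B1 B2 * 1) := by
        refine mul_le_mul_of_nonneg_left ?_ (sQ_nonneg B2 B3)
        exact mul_le_mul_of_nonneg_left (le_of_lt (mem_cbody.mp hv)) (sQ_nonneg B1 B2)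
    _ = sQ B1 B2 * sQ B2 B3 := by ring

/-- Comparison for the `L` maps: if `Q_b ≤ s Q_a` pointwise then `‖L_a v‖² ≤ s ‖L_b v‖²`. -/
lemma norm_Lf_le (Ba Bb : Paraball d) (s : ℝ) (hs : 0 ≤ s)
    (h : ∀ x, Qf Bb x ≤ s * Qf Ba x) (v : Eh d) :
    ‖Lf Ba v‖ ^ 2 ≤ s * ‖Lf Bb v‖ ^ 2 := by
  set y := Lf Ba v with hy
  set w := Lf Bb v with hwdef
  set z := Lf Ba y with hz
  have h1 : ‖y‖ ^ 2 = ⟪v, z⟫ := by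
    rw [← real_inner_self_eq_norm_sq]
    rw [hy, hz]
    rw [real_inner_comm, Lf_selfadj]
  have h2 : v = Mf Bb w := (Mf_Lf Bb v).symm
  have h3 : ⟪v, z⟫ = ⟪w, Mf Bb z⟫ := by
    rw [h2, Mf_selfadj, real_inner_comm]
  have h4 : ‖Mf Bb z‖ ^ 2 ≤ s * ‖y‖ ^ 2 := by
    have := h z
    rw [Qf_eq_norm_Mf Bb z, Qf_eq_norm_Mf Ba z] at this
    rw [hz, Mf_Lf] at this
    exact this
  have h5 : ‖y‖ ^ 2 ≤ ‖w‖ * ‖Mf Bb z‖ := by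
    rw [h1, h3]
    exact real_inner_le_norm w (Mf Bb z)
  rcases eq_or_lt_of_le (norm_nonneg y) with hy0 | hy0
  · rw [← hy0]
    simpa using mul_nonneg hs (sq_nonneg ‖w‖)
  · have h6 : ‖y‖ ^ 2 * ‖y‖ ^ 2 ≤ (‖w‖ * ‖Mf Bb z‖) * (‖w‖ * ‖Mf Bb z‖) :=
      mul_le_mul h5 h5 (sq_nonneg _) (mul_nonneg (norm_nonneg _) (norm_nonneg _))
    have h7 : ‖w‖ ^ 2 * ‖Mf Bb z‖ ^ 2 ≤ ‖w‖ ^ 2 * (s * ‖y‖ ^ 2) :=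
      mul_le_mul_of_nonneg_left h4 (sq_nonneg _)
    have hyy : 0 < ‖y‖ ^ 2 := by positivity
    nlinarith [hyy]


/-! ### Component bounds for varrho -/

lemma varrho_bounds (B1 B2 : Paraball d) :
    1 ≤ varrho B1 B2 ∧
    B2.rad ≤ varrho B1 B2 * B1.rad ∧
    B1.rad ≤ varrho B1 B2 * B2.rad ∧
    sQ B1 B2 ≤ varrho B1 B2 ∧
    sQ B2 B1 ≤ varrho B1 B2 ∧
    Qf B1 (B1.xb.1 - B2.xb.1) ≤ varrho B1 B2 ∧
    Qf B2 (B1.xb.1 - B2.xb.1) ≤ varrho B1 B2 ∧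
    QS B1 (B1.xs.1 - B2.xs.1) ≤ varrho B1 B2 ∧
    QS B2 (B1.xs.1 - B2.xs.1) ≤ varrho B1 B2 ∧
    |B2.xb.2 - B1.xs.2 - ‖B2.xb.1 - B1.xs.1‖ ^ 2| ≤ varrho B1 B2 * B1.rad ∧
    |B1.xb.2 - B2.xs.2 - ‖B1.xb.1 - B2.xs.1‖ ^ 2| ≤ varrho B1 B2 * B2.rad := by
  have o1 := B1.hrad
  have o2 := B2.hrad
  have omin : 0 < min B1.rad B2.rad := lt_min o1 o2
  have h1 : 1 ≤ max B1.rad B2.rad / min B1.rad B2.rad := (one_le_div omin).mpr min_le_max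
  have n2 := sQ_nonneg B1 B2
  have n3 := sQ_nonneg B2 B1
  have n4 := Qf_nonneg B1 (B1.xb.1 - B2.xb.1)
  have n5 := Qf_nonneg B2 (B1.xb.1 - B2.xb.1)
  have n6 := QS_nonneg B1 (B1.xs.1 - B2.xs.1)
  have n7 := QS_nonneg B2 (B1.xs.1 - B2.xs.1)
  have n8 : 0 ≤ |B2.xb.2 - B1.xs.2 - ‖B2.xb.1 - B1.xs.1‖ ^ 2| / B1.rad := by positivity
  have n9 : 0 ≤ |B1.xb.2 - B2.xs.2 - ‖B1.xb.1 - B2.xs.1‖ ^ 2| / B2.rad := by positivity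
  have hV := varrho_eq B1 B2
  have hV1 : 1 ≤ varrho B1 B2 := by rw [hV]; linarith
  have hVmm : max B1.rad B2.rad / min B1.rad B2.rad ≤ varrho B1 B2 := by rw [hV]; linarith
  have hmmle : max B1.rad B2.rad ≤ varrho B1 B2 * min B1.rad B2.rad := (div_le_iff₀ omin).mp hVmm
  have hV0 : 0 ≤ varrho B1 B2 := by linarith
  refine ⟨hV1, ?_, ?_, by rw [hV] at *; linarith, by rw [hV] at *; linarith,
    by rw [hV] at *; linarith, by rw [hV] at *; linarith, by rw [hV] at *; linarith,
    by rw [hV] at *; linarith, ?_, ?_⟩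
  · calc B2.rad ≤ max B1.rad B2.rad := le_max_right _ _
      _ ≤ varrho B1 B2 * min B1.rad B2.rad := hmmle
      _ ≤ varrho B1 B2 * B1.rad := mul_le_mul_of_nonneg_left (min_le_left _ _) hV0
  · calc B1.rad ≤ max B1.rad B2.rad := le_max_left _ _
      _ ≤ varrho B1 B2 * min B1.rad B2.rad := hmmle
      _ ≤ varrho B1 B2 * B2.rad := mul_le_mul_of_nonneg_left (min_le_right _ _) hV0
  · have h8 : |B2.xb.2 - B1.xs.2 - ‖B2.xb.1 - B1.xs.1‖ ^ 2| / B1.rad ≤ varrho B1 B2 := by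
      rw [hV]; linarith
    exact (div_le_iff₀ o1).mp h8
  · have h9 : |B1.xb.2 - B2.xs.2 - ‖B1.xb.1 - B2.xs.1‖ ^ 2| / B2.rad ≤ varrho B1 B2 := by
      rw [hV]; linarith
    exact (div_le_iff₀ o2).mp h9

/-- Coercivity: the Euclidean sizes are controlled by the quasidistance. -/
lemma coercive (B1 B2 : Paraball d) :
    ‖B2.xb.1 - B1.xs.1‖ ^ 2 ≤ (B1.rad + B2.rad) * varrho B1 B2 ∧
    ‖B1.xb.1 - B2.xs.1‖ ^ 2 ≤ (B1.rad + B2.rad) * varrho B1 B2 ∧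
    ‖B1.xs.1 - B1.xb.1‖ ^ 2 ≤ (B1.rad + B2.rad) * varrho B1 B2 ∧
    ‖B2.xs.1 - B2.xb.1‖ ^ 2 ≤ (B1.rad + B2.rad) * varrho B1 B2 := by
  obtain ⟨_, _, _, _, _, _, _, _, _, hX, hY⟩ := varrho_bounds B1 B2
  have hi1 := B1.incid
  have hi2 := B2.incid
  obtain ⟨eX1, eX2⟩ := abs_le.mp hX
  obtain ⟨eY1, eY2⟩ := abs_le.mp hY
  have p1 : (0:ℝ) ≤ ‖B2.xb.1 - B1.xs.1‖ ^ 2 := sq_nonneg _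
  have p2 : (0:ℝ) ≤ ‖B1.xb.1 - B2.xs.1‖ ^ 2 := sq_nonneg _
  have p3 : (0:ℝ) ≤ ‖B1.xs.1 - B1.xb.1‖ ^ 2 := sq_nonneg _
  have p4 : (0:ℝ) ≤ ‖B2.xs.1 - B2.xb.1‖ ^ 2 := sq_nonneg _
  refine ⟨by linarith, by linarith, by linarith, by linarith⟩

/-- The cross-term bound. -/
lemma cross_bound (u w1 w2 : Eh d) :
    |‖u‖ ^ 2 + ‖w1‖ ^ 2 + ‖w2‖ ^ 2 - ‖u + w1 + w2‖ ^ 2|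
      ≤ 2 * ‖u‖ ^ 2 + 2 * ‖w1‖ ^ 2 + 2 * ‖w2‖ ^ 2 := by
  have he : ‖u + w1 + w2‖ ^ 2
      = ‖u‖ ^ 2 + ‖w1‖ ^ 2 + ‖w2‖ ^ 2 + 2*⟪u,w1⟫ + 2*⟪u,w2⟫ + 2*⟪w1,w2⟫ := by
    rw [norm_add_sq_real (u + w1) w2, norm_add_sq_real u w1, inner_add_left]
    ring
  obtain ⟨l1, r1⟩ := abs_le.mp (abs_real_inner_le_norm u w1)
  obtain ⟨l2, r2⟩ := abs_le.mp (abs_real_inner_le_norm u w2)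
  obtain ⟨l3, r3⟩ := abs_le.mp (abs_real_inner_le_norm w1 w2)
  rw [he, abs_le]
  constructor
  · nlinarith [sq_nonneg (‖u‖ - ‖w1‖), sq_nonneg (‖u‖ - ‖w2‖), sq_nonneg (‖w1‖ - ‖w2‖)]
  · nlinarith [sq_nonneg (‖u‖ + ‖w1‖), sq_nonneg (‖u‖ + ‖w2‖), sq_nonneg (‖w1‖ + ‖w2‖)]

set_option maxHeartbeats 1000000 in
/-- Quasi-triangle inequality for the quasidistance `ϱ` between paraballs. -/
theorem paraball_quasitriangle (d : ℕ) (hd : 2 ≤ d) :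
    ∃ C : ℝ, 0 < C ∧ ∀ B1 B2 B3 : Paraball d,
      varrho B1 B3 ≤ C * varrho B1 B2 ^ C + C * varrho B2 B3 ^ C := by
  refine ⟨100, by norm_num, fun B1 B2 B3 => ?_⟩
  set a := varrho B1 B2 with hadef
  set b := varrho B2 B3 with hbdef
  obtain ⟨ha1, h12r2, h12r1, h12s, h12s', h12q1, h12q2, h12qs1, h12qs2, h12x, h12y⟩ :=
    varrho_bounds B1 B2
  obtain ⟨hb1, h23r3, h23r2, h23s, h23s', h23q2, h23q3, h23qs2, h23qs3, h23x, h23y⟩ :=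
    varrho_bounds B2 B3
  obtain ⟨c12a, c12b, c12c, c12d⟩ := coercive B1 B2
  obtain ⟨c23a, c23b, c23c, c23d⟩ := coercive B2 B3
  have o1 := B1.hrad
  have o2 := B2.hrad
  have o3 := B3.hrad
  have ha0 : (0:ℝ) ≤ a := by linarith only [ha1]
  have hb0 : (0:ℝ) ≤ b := by linarith only [hb1]
  -- radius comparisons
  have e1 : b * B2.rad ≤ b * (a * B1.rad) := mul_le_mul_of_nonneg_left h12r2 hb0
  have e2 : b * B3.rad ≤ b * (b * B2.rad) := mul_le_mul_of_nonneg_left h23r3 hb0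
  have e3 : b * (b * B2.rad) ≤ b * (b * (a * B1.rad)) := mul_le_mul_of_nonneg_left e1 hb0
  have e4 : a * B2.rad ≤ a * (a * B1.rad) := mul_le_mul_of_nonneg_left h12r2 ha0
  have f1 : a * B2.rad ≤ a * (b * B3.rad) := mul_le_mul_of_nonneg_left h23r2 ha0
  have f2 : a * B1.rad ≤ a * (a * B2.rad) := mul_le_mul_of_nonneg_left h12r1 ha0
  have f3 : a * (a * B2.rad) ≤ a * (a * (b * B3.rad)) := mul_le_mul_of_nonneg_left f1 ha0
  have f4 : b * B2.rad ≤ b * (b * B3.rad) := mul_le_mul_of_nonneg_left h23r2 hb0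
  -- T1
  have t1 : max B1.rad B3.rad / min B1.rad B3.rad ≤ a * b := by
    have h3le : B3.rad ≤ a * b * B1.rad := by
      calc B3.rad ≤ b * B2.rad := h23r3
        _ ≤ b * (a * B1.rad) := e1
        _ = a * b * B1.rad := by ring
    have h1le : B1.rad ≤ a * b * B3.rad := by
      have : a * B2.rad ≤ a * (b * B3.rad) := f1
      calc B1.rad ≤ a * B2.rad := h12r1
        _ ≤ a * (b * B3.rad) := f1
        _ = a * b * B3.rad := by ring
    rcases le_total B1.rad B3.rad with h | h
    · rw [max_eq_right h, min_eq_left h, div_le_iff₀ o1]; linarith only [h3le]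
    · rw [max_eq_left h, min_eq_right h, div_le_iff₀ o3]; linarith only [h1le]
  -- T2, T3
  have t2 : sQ B1 B3 ≤ a * b :=
    (sQ_mul B1 B2 B3).trans (mul_le_mul h12s h23s (sQ_nonneg _ _) ha0)
  have t3 : sQ B3 B1 ≤ a * b := by
    refine (sQ_mul B3 B2 B1).trans ?_
    calc sQ B3 B2 * sQ B2 B1 ≤ b * a := mul_le_mul h23s' h12s' (sQ_nonneg _ _) hb0
      _ = a * b := by ring
  -- T4, T5
  have t4 : Qf B1 (B1.xb.1 - B3.xb.1) ≤ 2 * a + 2 * (a * b) := by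
    have h' := Qf_sub_le B1 B1.xb.1 B2.xb.1 B3.xb.1
    have h'' : Qf B1 (B2.xb.1 - B3.xb.1) ≤ a * b := by
      calc Qf B1 (B2.xb.1 - B3.xb.1) ≤ sQ B2 B1 * Qf B2 (B2.xb.1 - B3.xb.1) :=
            Qf_le_mul B2 B1 _
        _ ≤ a * b := mul_le_mul h12s' h23q2 (Qf_nonneg _ _) ha0
    linarith only [h', h'', h12q1]
  have t5 : Qf B3 (B1.xb.1 - B3.xb.1) ≤ 2 * (a * b) + 2 * b := by
    have h' := Qf_sub_le B3 B1.xb.1 B2.xb.1 B3.xb.1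
    have h'' : Qf B3 (B1.xb.1 - B2.xb.1) ≤ a * b := by
      calc Qf B3 (B1.xb.1 - B2.xb.1) ≤ sQ B2 B3 * Qf B2 (B1.xb.1 - B2.xb.1) :=
            Qf_le_mul B2 B3 _
        _ ≤ b * a := mul_le_mul h23s h12q2 (Qf_nonneg _ _) hb0
        _ = a * b := by ring
    linarith only [h', h'', h23q3]
  -- T6
  have t6 : QS B1 (B1.xs.1 - B3.xs.1) ≤ 2 * a + 2 * (a ^ 3 * b) := by
    have h1 := norm_Lf_sub_le B1 B1.xs.1 B2.xs.1 B3.xs.1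
    have h2 : ‖Lf B1 (B1.xs.1 - B2.xs.1)‖ ^ 2 ≤ B1.rad ^ 2 * a := by
      rw [QS_eq] at h12qs1
      have := (div_le_iff₀ (by positivity : (0:ℝ) < B1.rad ^ 2)).mp h12qs1
      linarith
    have h3 : ‖Lf B2 (B2.xs.1 - B3.xs.1)‖ ^ 2 ≤ B2.rad ^ 2 * b := by
      rw [QS_eq] at h23qs2
      have := (div_le_iff₀ (by positivity : (0:ℝ) < B2.rad ^ 2)).mp h23qs2
      linarith
    have h4 : ‖Lf B1 (B2.xs.1 - B3.xs.1)‖ ^ 2 ≤ a * (B2.rad ^ 2 * b) := by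
      refine (norm_Lf_le B1 B2 (sQ B1 B2) (sQ_nonneg B1 B2) (Qf_le_mul B1 B2) _).trans ?_
      exact mul_le_mul h12s h3 (sq_nonneg _) ha0
    have h5 : B2.rad ^ 2 ≤ a ^ 2 * B1.rad ^ 2 := by
      have h' : B2.rad * B2.rad ≤ (a * B1.rad) * (a * B1.rad) :=
        mul_le_mul h12r2 h12r2 o2.le (by positivity)
      calc B2.rad ^ 2 = B2.rad * B2.rad := sq B2.rad
        _ ≤ (a * B1.rad) * (a * B1.rad) := h'
        _ = a ^ 2 * B1.rad ^ 2 := by ring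
    have h6 : a * (B2.rad ^ 2 * b) ≤ a * (a ^ 2 * B1.rad ^ 2 * b) := by
      refine mul_le_mul_of_nonneg_left ?_ ha0
      exact mul_le_mul_of_nonneg_right h5 hb0
    rw [QS_eq, div_le_iff₀ (by positivity : (0:ℝ) < B1.rad ^ 2)]
    linarith only [h1, h2, h4, h6]
  -- T7
  have t7 : QS B3 (B1.xs.1 - B3.xs.1) ≤ 2 * b + 2 * (a * b ^ 3) := by
    have h1 := norm_Lf_sub_le B3 B1.xs.1 B2.xs.1 B3.xs.1
    have h2 : ‖Lf B3 (B2.xs.1 - B3.xs.1)‖ ^ 2 ≤ B3.rad ^ 2 * b := by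
      rw [QS_eq] at h23qs3
      have := (div_le_iff₀ (by positivity : (0:ℝ) < B3.rad ^ 2)).mp h23qs3
      linarith
    have h3 : ‖Lf B2 (B1.xs.1 - B2.xs.1)‖ ^ 2 ≤ B2.rad ^ 2 * a := by
      rw [QS_eq] at h12qs2
      have := (div_le_iff₀ (by positivity : (0:ℝ) < B2.rad ^ 2)).mp h12qs2
      linarith
    have h4 : ‖Lf B3 (B1.xs.1 - B2.xs.1)‖ ^ 2 ≤ b * (B2.rad ^ 2 * a) := by
      refine (norm_Lf_le B3 B2 (sQ B3 B2) (sQ_nonneg B3 B2) (Qf_le_mul B3 B2) _).trans ?_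
      exact mul_le_mul h23s' h3 (sq_nonneg _) hb0
    have h5 : B2.rad ^ 2 ≤ b ^ 2 * B3.rad ^ 2 := by
      have h' : B2.rad * B2.rad ≤ (b * B3.rad) * (b * B3.rad) :=
        mul_le_mul h23r2 h23r2 o2.le (by positivity)
      calc B2.rad ^ 2 = B2.rad * B2.rad := sq B2.rad
        _ ≤ (b * B3.rad) * (b * B3.rad) := h'
        _ = b ^ 2 * B3.rad ^ 2 := by ring
    have h6 : b * (B2.rad ^ 2 * a) ≤ b * (b ^ 2 * B3.rad ^ 2 * a) := by
      refine mul_le_mul_of_nonneg_left ?_ hb0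
      exact mul_le_mul_of_nonneg_right h5 ha0
    rw [QS_eq, div_le_iff₀ (by positivity : (0:ℝ) < B3.rad ^ 2)]
    linarith only [h1, h2, h4, h6]
  -- T8
  have t8 : |B3.xb.2 - B1.xs.2 - ‖B3.xb.1 - B1.xs.1‖ ^ 2| / B1.rad
      ≤ 5 * a + 3 * (a * b) + 2 * (a * b ^ 2) + 4 * a ^ 2 := by
    set u := B3.xb.1 - B2.xs.1 with hu
    set w1 := B2.xs.1 - B2.xb.1 with hw1
    set w2 := B2.xb.1 - B1.xs.1 with hw2
    have hsum : B3.xb.1 - B1.xs.1 = u + w1 + w2 := by rw [hu, hw1, hw2]; abel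
    have hC := cross_bound u w1 w2
    have hid : B3.xb.2 - B1.xs.2 - ‖B3.xb.1 - B1.xs.1‖ ^ 2
        = (B2.xb.2 - B1.xs.2 - ‖w2‖ ^ 2) + (B3.xb.2 - B2.xs.2 - ‖u‖ ^ 2)
          + (‖u‖ ^ 2 + ‖w1‖ ^ 2 + ‖w2‖ ^ 2 - ‖u + w1 + w2‖ ^ 2) := by
      rw [hsum]
      have hi := B2.incid
      rw [← hw1] at hi
      linarith only [hi]
    have habs : |B3.xb.2 - B1.xs.2 - ‖B3.xb.1 - B1.xs.1‖ ^ 2|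
        ≤ |B2.xb.2 - B1.xs.2 - ‖w2‖ ^ 2| + |B3.xb.2 - B2.xs.2 - ‖u‖ ^ 2|
          + |‖u‖ ^ 2 + ‖w1‖ ^ 2 + ‖w2‖ ^ 2 - ‖u + w1 + w2‖ ^ 2| := by
      rw [hid]; exact abs_add_three _ _ _
    rw [div_le_iff₀ o1]
    linarith only [habs, hC, h12x, h23x, c23a, c12d, c12a, e1, e2, e3, e4]
  -- T9
  have t9 : |B1.xb.2 - B3.xs.2 - ‖B1.xb.1 - B3.xs.1‖ ^ 2| / B3.rad
      ≤ 5 * (a * b) + 3 * b + 4 * (a ^ 2 * b) + 2 * b ^ 2 := by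
    set u := B1.xb.1 - B2.xs.1 with hu
    set w1 := B2.xs.1 - B2.xb.1 with hw1
    set w2 := B2.xb.1 - B3.xs.1 with hw2
    have hsum : B1.xb.1 - B3.xs.1 = u + w1 + w2 := by rw [hu, hw1, hw2]; abel
    have hC := cross_bound u w1 w2
    have hid : B1.xb.2 - B3.xs.2 - ‖B1.xb.1 - B3.xs.1‖ ^ 2
        = (B1.xb.2 - B2.xs.2 - ‖u‖ ^ 2) + (B2.xb.2 - B3.xs.2 - ‖w2‖ ^ 2)
          + (‖u‖ ^ 2 + ‖w1‖ ^ 2 + ‖w2‖ ^ 2 - ‖u + w1 + w2‖ ^ 2) := by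
      rw [hsum]
      have hi := B2.incid
      rw [← hw1] at hi
      linarith only [hi]
    have habs : |B1.xb.2 - B3.xs.2 - ‖B1.xb.1 - B3.xs.1‖ ^ 2|
        ≤ |B1.xb.2 - B2.xs.2 - ‖u‖ ^ 2| + |B2.xb.2 - B3.xs.2 - ‖w2‖ ^ 2|
          + |‖u‖ ^ 2 + ‖w1‖ ^ 2 + ‖w2‖ ^ 2 - ‖u + w1 + w2‖ ^ 2| := by
      rw [hid]; exact abs_add_three _ _ _
    rw [div_le_iff₀ o3]
    linarith only [habs, hC, h12y, h23y, c12b, c12d, c23b, f1, f2, f3, f4]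
  -- monomial facts
  have pa : ∀ i j : ℕ, i ≤ 3 → j ≤ 3 → a ^ i * b ^ j ≤ a ^ 3 * b ^ 3 := by
    intro i j hi hj
    exact mul_le_mul (pow_le_pow_right₀ ha1 hi) (pow_le_pow_right₀ hb1 hj)
      (by positivity) (by positivity)
  have m_a : a ≤ a ^ 3 * b ^ 3 := by have := pa 1 0 (by norm_num) (by norm_num); simpa using this
  have m_b : b ≤ a ^ 3 * b ^ 3 := by have := pa 0 1 (by norm_num) (by norm_num); simpa using this
  have m_ab : a * b ≤ a ^ 3 * b ^ 3 := by
    have := pa 1 1 (by norm_num) (by norm_num); simpa using this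
  have m_a2 : a ^ 2 ≤ a ^ 3 * b ^ 3 := by
    have := pa 2 0 (by norm_num) (by norm_num); simpa using this
  have m_b2 : b ^ 2 ≤ a ^ 3 * b ^ 3 := by
    have := pa 0 2 (by norm_num) (by norm_num); simpa using this
  have m_ab2 : a * b ^ 2 ≤ a ^ 3 * b ^ 3 := by
    have := pa 1 2 (by norm_num) (by norm_num); simpa using this
  have m_a2b : a ^ 2 * b ≤ a ^ 3 * b ^ 3 := by
    have := pa 2 1 (by norm_num) (by norm_num); simpa using this
  have m_a3b : a ^ 3 * b ≤ a ^ 3 * b ^ 3 := by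
    have := pa 3 1 (by norm_num) (by norm_num); simpa using this
  have m_ab3 : a * b ^ 3 ≤ a ^ 3 * b ^ 3 := by
    have := pa 1 3 (by norm_num) (by norm_num); simpa using this
  have m_pos : (0:ℝ) ≤ a ^ 3 * b ^ 3 := by positivity
  have main : varrho B1 B3 ≤ 60 * (a ^ 3 * b ^ 3) := by
    rw [varrho_eq B1 B3]
    linarith only [t1, t2, t3, t4, t5, t6, t7, t8, t9, m_a, m_b, m_ab, m_a2, m_b2,
      m_ab2, m_a2b, m_a3b, m_ab3, m_pos]
  have hna : (0:ℝ) ≤ a ^ 6 := by positivity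
  have hnb : (0:ℝ) ≤ b ^ 6 := by positivity
  have hm : a ^ 3 * b ^ 3 ≤ a ^ 6 + b ^ 6 := by
    have h' := sq_nonneg (a ^ 3 - b ^ 3)
    have h'' : (a ^ 3 - b ^ 3) ^ 2 = a ^ 6 - 2 * (a ^ 3 * b ^ 3) + b ^ 6 := by ring
    linarith only [h', h'', hna, hnb]
  have h6a : a ^ 6 ≤ a ^ (100:ℝ) := by
    rw [show (100:ℝ) = ((100:ℕ):ℝ) by norm_num, Real.rpow_natCast]
    exact pow_le_pow_right₀ ha1 (by norm_num)
  have h6b : b ^ 6 ≤ b ^ (100:ℝ) := by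
    rw [show (100:ℝ) = ((100:ℕ):ℝ) by norm_num, Real.rpow_natCast]
    exact pow_le_pow_right₀ hb1 (by norm_num)
  linarith only [main, hm, h6a, h6b, hna, hnb]


end RadonParaboloid
end
end

section
/- The action of 𝒢_d on ℝ^d is generically d-fold transitive: for any two d-tuples of points {x_j : 1 ≤ j ≤ d} and {y_j : 1 ≤ j ≤ d} in ℝ^d, each lying in general position, there exists φ ∈ 𝒢_d satisfying φ(x_j) = y_j for all 1 ≤ j ≤ d. -/
open MeasureTheory Filter Set
open scoped ENNReal RealInnerProductSpace

noncomputable section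

namespace RadonParaboloid

/-- A collection of `d` points of `ℝ^d` lies in general position if the `d × d` matrix whose
`j`-th row consists of the first `d-1` coordinates of `x_j` followed by `1` is nonsingular. -/
def GeneralPosition (d : ℕ) (x : Fin d → E d) : Prop :=
  (Matrix.of fun j i : Fin d =>
    if h : (i : ℕ) < d - 1 then (x j).1 ⟨(i : ℕ), h⟩ else 1).det ≠ 0

section AuxG
open Matrix
variable {m : ℕ}

def mapL (A : Matrix (Fin m) (Fin m) ℝ) :
    EuclideanSpace ℝ (Fin m) →L[ℝ] EuclideanSpace ℝ (Fin m) :=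
  LinearMap.toContinuousLinearMap (Matrix.toEuclideanLin A)

lemma mapL_apply (A : Matrix (Fin m) (Fin m) ℝ) (v : EuclideanSpace ℝ (Fin m)) (k : Fin m) :
    mapL A v k = ∑ i, A k i * v i := by
  simp [mapL, Matrix.toEuclideanLin_apply, Matrix.mulVec, dotProduct]

lemma mapL_mapL {P Q : Matrix (Fin m) (Fin m) ℝ} (h : P * Q = 1)
    (v : EuclideanSpace ℝ (Fin m)) : mapL P (mapL Q v) = v := by
  simp [mapL, Matrix.toEuclideanLin_apply, Matrix.mulVec_mulVec, h]

lemma inner_mapL {A B : Matrix (Fin m) (Fin m) ℝ} (h : Aᵀ * B = 1)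
    (u v : EuclideanSpace ℝ (Fin m)) : ⟪mapL A u, mapL B v⟫ = ⟪u, v⟫ := by
  have hh : ∀ i l, (∑ k, A k i * B k l) = if i = l then (1:ℝ) else 0 := by
    intro i l
    have h2 := congrFun (congrFun h i) l
    rw [Matrix.mul_apply] at h2
    simp only [Matrix.transpose_apply] at h2
    rw [h2, Matrix.one_apply]
  rw [real_inner_comm (mapL B v) (mapL A u), real_inner_comm v u]
  simp only [PiLp.inner_apply, RCLike.inner_apply, conj_trivial, mapL_apply]
  calc ∑ k, (∑ i, A k i * u i) * (∑ l, B k l * v l)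
      = ∑ k, ∑ i, ∑ l, A k i * u i * (B k l * v l) := by
        refine Finset.sum_congr rfl fun k _ => ?_
        rw [Finset.sum_mul_sum]
    _ = ∑ i, ∑ l, (∑ k, A k i * B k l) * (u i * v l) := by
        rw [Finset.sum_comm]
        refine Finset.sum_congr rfl fun i _ => ?_
        rw [Finset.sum_comm]
        refine Finset.sum_congr rfl fun l _ => ?_
        rw [Finset.sum_mul]
        exact Finset.sum_congr rfl fun k _ => by ring
    _ = ∑ i, u i * v i := by
        simp [hh, ite_mul]


def phiMap (A : Matrix (Fin m) (Fin m) ℝ) (a b : EuclideanSpace ℝ (Fin m)) (c : ℝ) :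
    (EuclideanSpace ℝ (Fin m) × ℝ) → (EuclideanSpace ℝ (Fin m) × ℝ) :=
  fun x => (mapL A x.1 + a,
    x.2 - ⟪x.1, x.1⟫ + ⟪mapL A x.1 + a, mapL A x.1 + a⟫ - 2 * ⟪mapL A x.1 + a, b⟫ + c)

def psiMap (B : Matrix (Fin m) (Fin m) ℝ) (a b : EuclideanSpace ℝ (Fin m)) (c : ℝ) :
    (EuclideanSpace ℝ (Fin m) × ℝ) → (EuclideanSpace ℝ (Fin m) × ℝ) :=
  fun y => (mapL B y.1 + b,
    y.2 + ⟪y.1, y.1⟫ - ⟪mapL B y.1 + b, mapL B y.1 + b⟫ + 2 * ⟪mapL B y.1, a⟫ + c)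

def phiInv (B : Matrix (Fin m) (Fin m) ℝ) (a b : EuclideanSpace ℝ (Fin m)) (c : ℝ) :
    (EuclideanSpace ℝ (Fin m) × ℝ) → (EuclideanSpace ℝ (Fin m) × ℝ) :=
  fun w => (mapL Bᵀ ((w.1 - a)),
    w.2 + ⟪mapL Bᵀ ((w.1 - a)), mapL Bᵀ ((w.1 - a))⟫ - ⟪w.1, w.1⟫ + 2 * ⟪w.1, b⟫ - c)

def psiInv (A : Matrix (Fin m) (Fin m) ℝ) (a b : EuclideanSpace ℝ (Fin m)) (c : ℝ) :
    (EuclideanSpace ℝ (Fin m) × ℝ) → (EuclideanSpace ℝ (Fin m) × ℝ) :=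
  fun w => (mapL Aᵀ ((w.1 - b)),
    w.2 - ⟪mapL Aᵀ ((w.1 - b)), mapL Aᵀ ((w.1 - b))⟫ + ⟪w.1, w.1⟫ - 2 * ⟪(w.1 - b), a⟫ - c)

lemma contDiff_pair (T : Matrix (Fin m) (Fin m) ℝ) (u : EuclideanSpace ℝ (Fin m))
    (g : EuclideanSpace ℝ (Fin m) × ℝ → ℝ) (hg : ContDiff ℝ (⊤ : ℕ∞) g) :
    ContDiff ℝ (⊤ : ℕ∞) (fun w : EuclideanSpace ℝ (Fin m) × ℝ => ((mapL T (w.1 - u) : EuclideanSpace ℝ (Fin m)), g w)) := by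
  exact ContDiff.prodMk ((mapL T).contDiff.comp (contDiff_fst.sub contDiff_const)) hg

example (A : Matrix (Fin m) (Fin m) ℝ) (a b : EuclideanSpace ℝ (Fin m)) (c : ℝ) :
    ContDiff ℝ (⊤ : ℕ∞) (phiMap A a b c) := by
  unfold phiMap
  have h1 : ContDiff ℝ (⊤ : ℕ∞) (fun x : EuclideanSpace ℝ (Fin m) × ℝ => (mapL A x.1 + a : EuclideanSpace ℝ (Fin m))) :=
    ((mapL A).contDiff.comp contDiff_fst).add contDiff_const
  refine h1.prodMk ?_
  refine ContDiff.add (ContDiff.sub (ContDiff.add (ContDiff.sub contDiff_snd ?_) ?_) ?_) contDiff_const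
  · exact ContDiff.inner ℝ contDiff_fst contDiff_fst
  · exact ContDiff.inner ℝ h1 h1
  · exact contDiff_const.mul (ContDiff.inner ℝ h1 contDiff_const)


lemma contDiff_phiMap (A : Matrix (Fin m) (Fin m) ℝ) (a b : EuclideanSpace ℝ (Fin m)) (c : ℝ) :
    ContDiff ℝ (⊤ : ℕ∞) (phiMap A a b c) := by
  have h1 : ContDiff ℝ (⊤ : ℕ∞) (fun x : EuclideanSpace ℝ (Fin m) × ℝ =>
      (mapL A x.1 + a : EuclideanSpace ℝ (Fin m))) :=
    ((mapL A).contDiff.comp contDiff_fst).add contDiff_const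
  refine h1.prodMk ?_
  refine ContDiff.add (ContDiff.sub (ContDiff.add (ContDiff.sub contDiff_snd ?_) ?_) ?_) contDiff_const
  · exact ContDiff.inner ℝ contDiff_fst contDiff_fst
  · exact ContDiff.inner ℝ h1 h1
  · exact contDiff_const.mul (ContDiff.inner ℝ h1 contDiff_const)

lemma contDiff_psiMap (B : Matrix (Fin m) (Fin m) ℝ) (a b : EuclideanSpace ℝ (Fin m)) (c : ℝ) :
    ContDiff ℝ (⊤ : ℕ∞) (psiMap B a b c) := by
  have h1 : ContDiff ℝ (⊤ : ℕ∞) (fun x : EuclideanSpace ℝ (Fin m) × ℝ =>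
      (mapL B x.1 + b : EuclideanSpace ℝ (Fin m))) :=
    ((mapL B).contDiff.comp contDiff_fst).add contDiff_const
  have h2 : ContDiff ℝ (⊤ : ℕ∞) (fun x : EuclideanSpace ℝ (Fin m) × ℝ =>
      (mapL B x.1 : EuclideanSpace ℝ (Fin m))) := (mapL B).contDiff.comp contDiff_fst
  refine h1.prodMk ?_
  refine ContDiff.add (ContDiff.add (ContDiff.sub (ContDiff.add contDiff_snd ?_) ?_) ?_) contDiff_const
  · exact ContDiff.inner ℝ contDiff_fst contDiff_fst
  · exact ContDiff.inner ℝ h1 h1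
  · exact contDiff_const.mul (ContDiff.inner ℝ h2 contDiff_const)

lemma contDiff_phiInv (B : Matrix (Fin m) (Fin m) ℝ) (a b : EuclideanSpace ℝ (Fin m)) (c : ℝ) :
    ContDiff ℝ (⊤ : ℕ∞) (phiInv B a b c) := by
  have h1 : ContDiff ℝ (⊤ : ℕ∞) (fun w : EuclideanSpace ℝ (Fin m) × ℝ =>
      (mapL Bᵀ (w.1 - a) : EuclideanSpace ℝ (Fin m))) :=
    (mapL Bᵀ).contDiff.comp (contDiff_fst.sub contDiff_const)
  refine h1.prodMk ?_
  refine ContDiff.sub (ContDiff.add (ContDiff.sub (ContDiff.add contDiff_snd ?_) ?_) ?_) contDiff_const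
  · exact ContDiff.inner ℝ h1 h1
  · exact ContDiff.inner ℝ contDiff_fst contDiff_fst
  · exact contDiff_const.mul (ContDiff.inner ℝ contDiff_fst contDiff_const)

lemma contDiff_psiInv (A : Matrix (Fin m) (Fin m) ℝ) (a b : EuclideanSpace ℝ (Fin m)) (c : ℝ) :
    ContDiff ℝ (⊤ : ℕ∞) (psiInv A a b c) := by
  have h1 : ContDiff ℝ (⊤ : ℕ∞) (fun w : EuclideanSpace ℝ (Fin m) × ℝ =>
      (mapL Aᵀ (w.1 - b) : EuclideanSpace ℝ (Fin m))) :=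
    (mapL Aᵀ).contDiff.comp (contDiff_fst.sub contDiff_const)
  refine h1.prodMk ?_
  refine ContDiff.sub (ContDiff.sub (ContDiff.add (ContDiff.sub contDiff_snd ?_) ?_) ?_) contDiff_const
  · exact ContDiff.inner ℝ h1 h1
  · exact ContDiff.inner ℝ contDiff_fst contDiff_fst
  · exact contDiff_const.mul (ContDiff.inner ℝ (contDiff_fst.sub contDiff_const) contDiff_const)

lemma phi_leftInv {A B : Matrix (Fin m) (Fin m) ℝ} (hTB : Bᵀ * A = 1)
    (a b : EuclideanSpace ℝ (Fin m)) (c : ℝ) :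
    ∀ x : EuclideanSpace ℝ (Fin m) × ℝ, phiInv B a b c (phiMap A a b c x) = x := by
  intro x
  have e1 : mapL Bᵀ ((mapL A x.1 + a) - a) = x.1 := by
    rw [add_sub_cancel_right]; exact mapL_mapL hTB x.1
  simp only [phiMap, phiInv]
  rw [e1]
  refine Prod.ext rfl ?_
  simp only
  ring

lemma phi_rightInv {A B : Matrix (Fin m) (Fin m) ℝ} (hABT : A * Bᵀ = 1)
    (a b : EuclideanSpace ℝ (Fin m)) (c : ℝ) :
    ∀ w : EuclideanSpace ℝ (Fin m) × ℝ, phiMap A a b c (phiInv B a b c w) = w := by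
  intro w
  have e1 : mapL A (mapL Bᵀ (w.1 - a)) + a = w.1 := by
    rw [mapL_mapL hABT, sub_add_cancel]
  simp only [phiMap, phiInv]
  rw [e1]
  refine Prod.ext rfl ?_
  simp only
  ring

lemma psi_leftInv {A B : Matrix (Fin m) (Fin m) ℝ} (h : Aᵀ * B = 1)
    (a b : EuclideanSpace ℝ (Fin m)) (c : ℝ) :
    ∀ y : EuclideanSpace ℝ (Fin m) × ℝ, psiInv A a b c (psiMap B a b c y) = y := by
  intro y
  have e1 : mapL Aᵀ ((mapL B y.1 + b) - b) = y.1 := by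
    rw [add_sub_cancel_right]; exact mapL_mapL h y.1
  have e2 : (mapL B y.1 + b) - b = mapL B y.1 := add_sub_cancel_right _ _
  simp only [psiMap, psiInv]
  rw [e1, e2]
  refine Prod.ext rfl ?_
  simp only
  ring

lemma psi_rightInv {A B : Matrix (Fin m) (Fin m) ℝ} (hBA : B * Aᵀ = 1)
    (a b : EuclideanSpace ℝ (Fin m)) (c : ℝ) :
    ∀ w : EuclideanSpace ℝ (Fin m) × ℝ, psiMap B a b c (psiInv A a b c w) = w := by
  intro w
  have e1 : mapL B (mapL Aᵀ (w.1 - b)) = w.1 - b := mapL_mapL hBA _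
  simp only [psiMap, psiInv]
  rw [e1, sub_add_cancel]
  refine Prod.ext rfl ?_
  simp only
  ring

lemma theta_id {A B : Matrix (Fin m) (Fin m) ℝ} (h : Aᵀ * B = 1)
    (a b : EuclideanSpace ℝ (Fin m)) (c : ℝ) :
    ∀ x y : EuclideanSpace ℝ (Fin m) × ℝ,
      Theta (m + 1) (phiMap A a b c x) (psiMap B a b c y) = 1 * Theta (m + 1) x y := by
  intro xx yy
  have hip : ⟪mapL A xx.1, mapL B yy.1⟫ = ⟪xx.1, yy.1⟫ := inner_mapL h _ _
  show (phiMap A a b c xx).2 - (psiMap B a b c yy).2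
      - ‖(phiMap A a b c xx).1 - (psiMap B a b c yy).1‖ ^ 2
      = 1 * (xx.2 - yy.2 - ‖xx.1 - yy.1‖ ^ 2)
  simp only [phiMap, psiMap, one_mul]
  rw [norm_sub_sq_real, norm_sub_sq_real, ← real_inner_self_eq_norm_sq,
    ← real_inner_self_eq_norm_sq, ← real_inner_self_eq_norm_sq, ← real_inner_self_eq_norm_sq]
  simp only [inner_add_left, inner_add_right]
  rw [hip, real_inner_comm a (mapL B yy.1)]
  ring

lemma phiMap_mem_Gdd (A B : Matrix (Fin m) (Fin m) ℝ) (h : Aᵀ * B = 1)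
    (a b : EuclideanSpace ℝ (Fin m)) (c : ℝ) :
    (phiMap A a b c, psiMap B a b c) ∈ Gdd (m + 1) := by
  have hTB : Bᵀ * A = 1 := by
    have h2 := congrArg Matrix.transpose h
    rwa [Matrix.transpose_mul, Matrix.transpose_transpose, Matrix.transpose_one] at h2
  have hABT : A * Bᵀ = 1 := mul_eq_one_comm.mp hTB
  have hBA : B * Aᵀ = 1 := mul_eq_one_comm.mp h
  exact ⟨⟨phiInv B a b c, contDiff_phiMap A a b c, contDiff_phiInv B a b c,
      phi_leftInv hTB a b c, phi_rightInv hABT a b c⟩,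
    ⟨psiInv A a b c, contDiff_psiMap B a b c, contDiff_psiInv A a b c,
      psi_leftInv h a b c, psi_rightInv hBA a b c⟩,
    1, one_ne_zero, theta_id h a b c⟩


end AuxG

/-- The action of `𝒢_d` on `ℝ^d` is generically `d`-fold transitive. -/
theorem generically_d_fold_transitive (d : ℕ) (hd : 2 ≤ d)
    (x y : Fin d → E d) (hx : GeneralPosition d x) (hy : GeneralPosition d y) :
    ∃ φ ∈ Gd d, ∀ j : Fin d, φ (x j) = y j := by
  obtain ⟨m, rfl⟩ : ∃ m, d = m + 1 := ⟨d - 1, by omega⟩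
  classical
  set X : Matrix (Fin (m+1)) (Fin (m+1)) ℝ :=
    Matrix.of (fun j i : Fin (m+1) =>
      if h : (i : ℕ) < (m+1) - 1 then (x j).1 ⟨(i : ℕ), h⟩ else 1) with hXdef
  set Y : Matrix (Fin (m+1)) (Fin (m+1)) ℝ :=
    Matrix.of (fun j i : Fin (m+1) =>
      if h : (i : ℕ) < (m+1) - 1 then (y j).1 ⟨(i : ℕ), h⟩ else 1) with hYdef
  have hX : IsUnit X.det := isUnit_iff_ne_zero.mpr hx
  have hY : IsUnit Y.det := isUnit_iff_ne_zero.mpr hy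
  have hXe : ∀ j (i : Fin m), X j i.castSucc = (x j).1 i := by
    intro j i
    show (if h : ((i.castSucc : Fin (m+1)) : ℕ) < (m+1) - 1 then (x j).1 ⟨_, h⟩ else 1)
        = (x j).1 i
    rw [dif_pos (by simpa using i.isLt)]
    exact congrArg (x j).1 (Fin.ext (by simp))
  have hYe : ∀ j (i : Fin m), Y j i.castSucc = (y j).1 i := by
    intro j i
    show (if h : ((i.castSucc : Fin (m+1)) : ℕ) < (m+1) - 1 then (y j).1 ⟨_, h⟩ else 1)
        = (y j).1 i
    rw [dif_pos (by simpa using i.isLt)]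
    exact congrArg (y j).1 (Fin.ext (by simp))
  have hXl : ∀ j, X j (Fin.last m) = 1 := by
    intro j
    show (if h : ((Fin.last m : Fin (m+1)) : ℕ) < (m+1) - 1 then (x j).1 ⟨_, h⟩ else 1) = 1
    rw [dif_neg (by simp)]
  have hYl : ∀ j, Y j (Fin.last m) = 1 := by
    intro j
    show (if h : ((Fin.last m : Fin (m+1)) : ℕ) < (m+1) - 1 then (y j).1 ⟨_, h⟩ else 1) = 1
    rw [dif_neg (by simp)]
  set C : Matrix (Fin (m+1)) (Fin (m+1)) ℝ := X⁻¹ * Y with hCdef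
  set D : Matrix (Fin (m+1)) (Fin (m+1)) ℝ := Y⁻¹ * X with hDdef
  have hXC : X * C = Y := by
    rw [hCdef, ← Matrix.mul_assoc, Matrix.mul_nonsing_inv _ hX, Matrix.one_mul]
  have hCD : C * D = 1 := by
    rw [hCdef, hDdef, Matrix.mul_assoc, ← Matrix.mul_assoc Y, Matrix.mul_nonsing_inv _ hY,
      Matrix.one_mul, Matrix.nonsing_inv_mul _ hX]
  have hlastcol : ∀ rr, C rr (Fin.last m)
      = (1 : Matrix (Fin (m+1)) (Fin (m+1)) ℝ) rr (Fin.last m) := by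
    intro rr
    have h1 : C rr (Fin.last m) = ∑ k, X⁻¹ rr k * Y k (Fin.last m) := by
      rw [hCdef, Matrix.mul_apply]
    rw [h1]
    calc ∑ k, X⁻¹ rr k * Y k (Fin.last m) = ∑ k, X⁻¹ rr k * X k (Fin.last m) :=
          Finset.sum_congr rfl fun k _ => by rw [hYl, hXl]
      _ = (X⁻¹ * X) rr (Fin.last m) := (Matrix.mul_apply).symm
      _ = _ := by rw [Matrix.nonsing_inv_mul _ hX]
  have hClast : ∀ i : Fin m, C i.castSucc (Fin.last m) = 0 := fun i => by
    rw [hlastcol]; exact Matrix.one_apply_ne (Fin.castSucc_lt_last i).ne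
  set A : Matrix (Fin m) (Fin m) ℝ :=
    Matrix.of (fun k i : Fin m => C i.castSucc k.castSucc) with hAdef
  set B : Matrix (Fin m) (Fin m) ℝ :=
    Matrix.of (fun k i : Fin m => D k.castSucc i.castSucc) with hBdef
  have hAB : Matrix.transpose A * B = 1 := by
    ext i l
    have h1 : (Matrix.transpose A * B) i l
        = ∑ k : Fin m, C i.castSucc k.castSucc * D k.castSucc l.castSucc := by
      rw [Matrix.mul_apply]
      exact Finset.sum_congr rfl fun k _ => by
        rw [Matrix.transpose_apply, hAdef, hBdef]; rfl
    have h2 : (C * D) i.castSucc l.castSucc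
        = (∑ k : Fin m, C i.castSucc k.castSucc * D k.castSucc l.castSucc)
          + C i.castSucc (Fin.last m) * D (Fin.last m) l.castSucc := by
      rw [Matrix.mul_apply, Fin.sum_univ_castSucc]
    rw [hCD, hClast i, zero_mul, add_zero] at h2
    rw [h1, ← h2, Matrix.one_apply, Matrix.one_apply]
    simp [Fin.castSucc_inj]
  set a : EuclideanSpace ℝ (Fin m) :=
    (WithLp.equiv 2 (Fin m → ℝ)).symm (fun k => C (Fin.last m) k.castSucc) with hadef
  set r : Fin (m+1) → ℝ := fun j =>
    (y j).2 - (x j).2 + (@inner ℝ (EuclideanSpace ℝ (Fin m)) _ (x j).1 (x j).1)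
      - (@inner ℝ (EuclideanSpace ℝ (Fin m)) _ (y j).1 (y j).1) with hrdef
  set w : Fin (m+1) → ℝ := Y⁻¹.mulVec r with hwdef
  set b : EuclideanSpace ℝ (Fin m) :=
    (WithLp.equiv 2 (Fin m → ℝ)).symm (fun k => -(w k.castSucc) / 2) with hbdef
  set c : ℝ := w (Fin.last m) with hcdef
  have hw : ∀ jj, ∑ i, Y jj i * w i = r jj := by
    intro jj
    have h1 : Y.mulVec w = r := by
      rw [hwdef, Matrix.mulVec_mulVec, Matrix.mul_nonsing_inv _ hY, Matrix.one_mulVec]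
    calc ∑ i, Y jj i * w i = Y.mulVec w jj := rfl
      _ = r jj := by rw [h1]
  refine ⟨phiMap A a b c, ⟨psiMap B a b c, phiMap_mem_Gdd A B hAB a b c⟩, ?_⟩
  intro j
  have hfirst : mapL A (x j).1 + a = (y j).1 := by
    ext k
    have e1 : (mapL A (x j).1 + a) k
        = (∑ i : Fin m, C i.castSucc k.castSucc * (x j).1 i) + C (Fin.last m) k.castSucc := by
      rw [PiLp.add_apply, mapL_apply]
      congr 1
    have e2 : ∑ i : Fin (m+1), X j i * C i k.castSucc
        = (∑ i : Fin m, C i.castSucc k.castSucc * (x j).1 i) + C (Fin.last m) k.castSucc := by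
      rw [Fin.sum_univ_castSucc, hXl, one_mul]
      congr 1
      exact Finset.sum_congr rfl fun i _ => by rw [hXe, mul_comm]
    have e3 : ∑ i : Fin (m+1), X j i * C i k.castSucc = Y j k.castSucc := by
      rw [← Matrix.mul_apply, hXC]
    rw [e1, ← e2, e3, hYe]
  have key : -2 * (@inner ℝ (EuclideanSpace ℝ (Fin m)) _ (y j).1 b) + c = r j := by
    have h3 : (@inner ℝ (EuclideanSpace ℝ (Fin m)) _ (y j).1 b)
        = ∑ k : Fin m, Y j k.castSucc * (-(w k.castSucc) / 2) := by
      simp only [PiLp.inner_apply, RCLike.inner_apply, conj_trivial]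
      refine Finset.sum_congr rfl fun k _ => ?_
      rw [hYe, mul_comm (b.ofLp k), hbdef, WithLp.equiv_symm_apply, PiLp.toLp_apply]
    have h4 := hw j
    rw [Fin.sum_univ_castSucc, hYl, one_mul] at h4
    rw [h3, Finset.mul_sum]
    have h5 : ∑ k : Fin m, -2 * (Y j k.castSucc * (-(w k.castSucc) / 2))
        = ∑ k : Fin m, Y j k.castSucc * w k.castSucc :=
      Finset.sum_congr rfl fun k _ => by ring
    rw [h5, hcdef]
    linarith [h4]
  have h2 : (phiMap A a b c (x j)).2 = (y j).2 := by
    show (x j).2 - (@inner ℝ (EuclideanSpace ℝ (Fin m)) _ (x j).1 (x j).1)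
        + (@inner ℝ (EuclideanSpace ℝ (Fin m)) _ (mapL A (x j).1 + a) (mapL A (x j).1 + a))
        - 2 * (@inner ℝ (EuclideanSpace ℝ (Fin m)) _ (mapL A (x j).1 + a) b) + c = (y j).2
    rw [hfirst]
    have hr : r j = (y j).2 - (x j).2 + (@inner ℝ (EuclideanSpace ℝ (Fin m)) _ (x j).1 (x j).1)
        - (@inner ℝ (EuclideanSpace ℝ (Fin m)) _ (y j).1 (y j).1) := by rw [hrdef]
    linarith [key, hr]
  exact Prod.ext hfirst h2


end RadonParaboloid
end
end

section
/- Let A ∈ GL(d,ℝ) and let φ : V → U be a C^2 diffeomorphism of an open set V ⊂ ℝ^{d−1} onto a subset U of the domain of F. Then the affine surface measure satisfies σ_{A∘F}(U) = |det(A)|^{(d−1)/(d+1)} σ_F(U) and σ_{F∘φ}(V) = σ_F(φ(V)). -/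
open MeasureTheory Filter Set
open scoped ENNReal RealInnerProductSpace

noncomputable section

namespace RadonParaboloid

/-- The mixed-derivative determinant `F_{i,j}(t)`: the determinant of the `d × d` matrix whose
first `d-1` columns are `∂F/∂t_1, …, ∂F/∂t_{d-1}` and whose last column is `∂²F/∂t_i∂t_j`. -/
def Fmix (d : ℕ) (F : (Fin (d - 1) → ℝ) → Fin d → ℝ) (i j : Fin (d - 1))
    (t : Fin (d - 1) → ℝ) : ℝ :=
  (Matrix.of fun (row col : Fin d) =>
    if h : (col : ℕ) < d - 1 then
      fderiv ℝ F t (Pi.single (⟨(col : ℕ), h⟩ : Fin (d - 1)) 1) row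
    else fderiv ℝ (fun s => fderiv ℝ F s (Pi.single i 1)) t (Pi.single j 1) row).det

/-- `ℒ_F(t) = det (F_{i,j}(t))_{i,j}`. -/
def calL (d : ℕ) (F : (Fin (d - 1) → ℝ) → Fin d → ℝ) (t : Fin (d - 1) → ℝ) : ℝ :=
  (Matrix.of fun i j : Fin (d - 1) => Fmix d F i j t).det

/-- The affine surface measure `σ_F(U) = ∫_U |ℒ_F(t)|^{1/(d+1)} dt`. -/
def affSurf (d : ℕ) (F : (Fin (d - 1) → ℝ) → Fin d → ℝ) (U : Set (Fin (d - 1) → ℝ)) : ℝ :=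
  ∫ t in U, |calL d F t| ^ (1 / ((d : ℝ) + 1))

def Mk (d : ℕ) (C : Fin (d - 1) → Fin d → ℝ) (w : Fin d → ℝ) : Matrix (Fin d) (Fin d) ℝ :=
  Matrix.of fun row col => if h : (col : ℕ) < d - 1 then C ⟨(col : ℕ), h⟩ row else w row

lemma Fmix_eq_det (d : ℕ) (F : (Fin (d - 1) → ℝ) → Fin d → ℝ) (i j : Fin (d - 1))
    (t : Fin (d - 1) → ℝ) :
    Fmix d F i j t = (Mk d (fun k row => fderiv ℝ F t (Pi.single k 1) row)
      (fun row => fderiv ℝ (fun s => fderiv ℝ F s (Pi.single i 1)) t (Pi.single j 1) row)).det :=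
  rfl

lemma toMatrix'_eq {m : ℕ} (P : (Fin m → ℝ) →L[ℝ] (Fin m → ℝ)) :
    (Matrix.of fun k l : Fin m => P (Pi.single l 1) k) = LinearMap.toMatrix' (P : (Fin m → ℝ) →ₗ[ℝ] (Fin m → ℝ)) := by
  ext k l
  rw [LinearMap.toMatrix'_apply]
  simp only [Matrix.of_apply, ContinuousLinearMap.coe_coe]

lemma apply_eq_sum_mul {n : ℕ} (A : (Fin n → ℝ) →ₗ[ℝ] (Fin n → ℝ)) (u : Fin n → ℝ) (row : Fin n) :
    A u row = ∑ c, LinearMap.toMatrix' A row c * u c := by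
  have h : A u = Matrix.toLin' (LinearMap.toMatrix' A) u := by rw [Matrix.toLin'_toMatrix']
  rw [h, Matrix.toLin'_apply]
  rfl

/-- The identification `Fin (d-1) ⊕ Fin 1 ≃ Fin d`. -/
def eqv {d : ℕ} (hd : 2 ≤ d) : Fin (d - 1) ⊕ Fin 1 ≃ Fin d :=
  finSumFinEquiv.trans (finCongr (by omega))

lemma eqv_inl_coe {d : ℕ} (hd : 2 ≤ d) (c : Fin (d - 1)) :
    ((eqv hd (Sum.inl c) : Fin d) : ℕ) = (c : ℕ) := by
  simp [eqv]

lemma eqv_inr_coe {d : ℕ} (hd : 2 ≤ d) (j : Fin 1) :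
    ((eqv hd (Sum.inr j) : Fin d) : ℕ) = d - 1 := by
  simp [eqv]

lemma Mk_apply_inl {d : ℕ} (hd : 2 ≤ d) (C : Fin (d - 1) → Fin d → ℝ) (w : Fin d → ℝ)
    (row : Fin d) (c : Fin (d - 1)) : Mk d C w row (eqv hd (Sum.inl c)) = C c row := by
  have h : ((eqv hd (Sum.inl c) : Fin d) : ℕ) < d - 1 := by rw [eqv_inl_coe]; exact c.isLt
  simp only [Mk, Matrix.of_apply, dif_pos h]
  have hc : (⟨((eqv hd (Sum.inl c) : Fin d) : ℕ), h⟩ : Fin (d - 1)) = c :=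
    Fin.ext (eqv_inl_coe hd c)
  rw [hc]

lemma Mk_apply_inr {d : ℕ} (hd : 2 ≤ d) (C : Fin (d - 1) → Fin d → ℝ) (w : Fin d → ℝ)
    (row : Fin d) (j : Fin 1) : Mk d C w row (eqv hd (Sum.inr j)) = w row := by
  have h : ¬ ((eqv hd (Sum.inr j) : Fin d) : ℕ) < d - 1 := by rw [eqv_inr_coe]; omega
  simp only [Mk, Matrix.of_apply, dif_neg h]

/-- Main column-operation lemma. -/
lemma detMk_combo {d : ℕ} (hd : 2 ≤ d) (C : Fin (d - 1) → Fin d → ℝ) (v : Fin d → ℝ)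
    (p : Matrix (Fin (d - 1)) (Fin (d - 1)) ℝ) (a : Fin (d - 1) → ℝ) :
    (Mk d (fun k row => ∑ c, p c k * C c row) (fun row => v row + ∑ c, a c * C c row)).det
      = p.det * (Mk d C v).det := by
  set Q : Matrix (Fin d) (Fin d) ℝ :=
    (Matrix.fromBlocks p (Matrix.of fun c (_ : Fin 1) => a c) 0 1).submatrix
      (eqv hd).symm (eqv hd).symm with hQ
  have hprod : (Mk d (fun k row => ∑ c, p c k * C c row)
      (fun row => v row + ∑ c, a c * C c row)) = (Mk d C v) * Q := by
    ext row col
    rw [Matrix.mul_apply]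
    rw [← (eqv hd).sum_comp (fun c => Mk d C v row c * Q c col)]
    rw [Fintype.sum_sum_type]
    obtain ⟨s, rfl⟩ := (eqv hd).surjective col
    have hQQ : ∀ s1 s2, Q (eqv hd s1) (eqv hd s2)
        = Matrix.fromBlocks p (Matrix.of fun c (_ : Fin 1) => a c) 0 1 s1 s2 := by
      intro s1 s2; simp [hQ]
    cases s with
    | inl k =>
        rw [Mk_apply_inl]
        simp only [hQQ, Fin.sum_univ_one, Mk_apply_inl hd, Mk_apply_inr hd,
          Matrix.fromBlocks_apply₁₁, Matrix.fromBlocks_apply₂₁, Matrix.zero_apply,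
          mul_zero, add_zero]
        exact Finset.sum_congr rfl fun c _ => mul_comm _ _
    | inr j =>
        rw [Fin.eq_zero j, Mk_apply_inr]
        simp only [hQQ, Fin.sum_univ_one, Mk_apply_inl hd, Mk_apply_inr hd,
          Matrix.fromBlocks_apply₁₂, Matrix.fromBlocks_apply₂₂, Matrix.of_apply,
          Matrix.one_apply_eq, mul_one]
        rw [add_comm]
        congr 1
        exact Finset.sum_congr rfl fun c _ => mul_comm _ _
  rw [hprod, Matrix.det_mul]
  have hdetQ : Q.det = p.det := by
    have heq : Q.submatrix (eqv hd) (eqv hd)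
        = Matrix.fromBlocks p (Matrix.of fun c (_ : Fin 1) => a c) 0 1 := by
      simp [hQ, Matrix.submatrix_submatrix]
    calc Q.det = (Q.submatrix (eqv hd) (eqv hd)).det :=
          (Matrix.det_submatrix_equiv_self (eqv hd) Q).symm
      _ = p.det := by rw [heq, Matrix.det_fromBlocks_zero₂₁]; simp
  rw [hdetQ, mul_comm]

def lastIdx {d : ℕ} (hd : 2 ≤ d) : Fin d := ⟨d - 1, by omega⟩

lemma Mk_eq_updateColumn {d : ℕ} (hd : 2 ≤ d) (C : Fin (d - 1) → Fin d → ℝ) (w : Fin d → ℝ) :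
    Mk d C w = (Mk d C 0).updateCol (lastIdx hd) w := by
  ext row col
  rw [Matrix.updateCol_apply]
  by_cases h : (col : ℕ) < d - 1
  · have hne : col ≠ lastIdx hd := by
      intro hc; rw [hc] at h; simp [lastIdx] at h
    rw [if_neg hne]
    simp [Mk, h]
  · have hcol : col = lastIdx hd := Fin.ext (by have := col.isLt; simp [lastIdx]; omega)
    rw [if_pos hcol]
    simp [Mk, h]

lemma detMk_add {d : ℕ} (hd : 2 ≤ d) (C : Fin (d - 1) → Fin d → ℝ) (v w : Fin d → ℝ) :
    (Mk d C (fun r => v r + w r)).det = (Mk d C v).det + (Mk d C w).det := by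
  rw [Mk_eq_updateColumn hd, Mk_eq_updateColumn hd C v, Mk_eq_updateColumn hd C w]
  exact Matrix.det_updateCol_add _ _ _ _

lemma detMk_smul {d : ℕ} (hd : 2 ≤ d) (C : Fin (d - 1) → Fin d → ℝ) (s : ℝ) (v : Fin d → ℝ) :
    (Mk d C (s • v)).det = s * (Mk d C v).det := by
  rw [Mk_eq_updateColumn hd, Mk_eq_updateColumn hd C v]
  exact Matrix.det_updateCol_smul _ _ _ _

lemma detMk_zero {d : ℕ} (hd : 2 ≤ d) (C : Fin (d - 1) → Fin d → ℝ) : (Mk d C 0).det = 0 := by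
  have h := detMk_smul hd C 0 0
  simpa using h

lemma detMk_sum {d : ℕ} (hd : 2 ≤ d) {ι : Type*} (s : Finset ι) (C : Fin (d - 1) → Fin d → ℝ)
    (g : ι → Fin d → ℝ) :
    (Mk d C (∑ x ∈ s, g x)).det = ∑ x ∈ s, (Mk d C (g x)).det := by
  classical
  induction s using Finset.induction_on with
  | empty => simpa using detMk_zero hd C
  | @insert x s hx ih =>
      rw [Finset.sum_insert hx, Finset.sum_insert hx, ← ih]
      have h := detMk_add hd C (g x) (∑ y ∈ s, g y)
      have hfun : (fun r => g x r + (∑ y ∈ s, g y) r) = g x + ∑ y ∈ s, g y := by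
        funext r; simp
      rw [hfun] at h
      exact h



lemma clm_apply_eq_sum {m : ℕ} {G : Type*} [NormedAddCommGroup G] [NormedSpace ℝ G]
    (M : (Fin m → ℝ) →L[ℝ] G) (v : Fin m → ℝ) :
    M v = ∑ l, v l • M (Pi.single l 1) := by
  have hv : v = ∑ l, v l • (Pi.single l 1 : Fin m → ℝ) := by
    ext j
    simp [Pi.single_apply]
  conv_lhs => rw [hv]
  rw [map_sum]
  exact Finset.sum_congr rfl fun l _ => M.map_smul _ _

lemma fderiv_fderiv_single {m n : ℕ} {F : (Fin m → ℝ) → (Fin n → ℝ)} {y : Fin m → ℝ}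
    (hF2 : ContDiffAt ℝ 2 F y) (v w : Fin m → ℝ) :
    fderiv ℝ (fun s => fderiv ℝ F s v) y w = fderiv ℝ (fderiv ℝ F) y w v := by
  have h1 : ContDiffAt ℝ 1 (fderiv ℝ F) y := hF2.fderiv_right (by norm_num)
  have hD2 : HasFDerivAt (fderiv ℝ F) (fderiv ℝ (fderiv ℝ F) y) y :=
    (h1.differentiableAt one_ne_zero).hasFDerivAt
  have h := (hD2.clm_apply (hasFDerivAt_const v y)).fderiv
  rw [h]
  simp

lemma Fmix_linearMap (d : ℕ) (F : (Fin (d - 1) → ℝ) → Fin d → ℝ)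
    {Ω : Set (Fin (d - 1) → ℝ)} (hΩ : IsOpen Ω) (hF : ContDiffOn ℝ 2 F Ω)
    (A : (Fin d → ℝ) ≃ₗ[ℝ] (Fin d → ℝ)) {t : Fin (d - 1) → ℝ} (ht : t ∈ Ω)
    (i j : Fin (d - 1)) :
    Fmix d (fun s => A (F s)) i j t = LinearMap.det A.toLinearMap * Fmix d F i j t := by
  set Aclm : (Fin d → ℝ) →L[ℝ] (Fin d → ℝ) := LinearMap.toContinuousLinearMap A.toLinearMap
    with hAclm
  have hAco : ⇑Aclm = ⇑A := by
    rw [hAclm]; ext x; simp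
  have hF2 : ∀ s ∈ Ω, ContDiffAt ℝ 2 F s := fun s hs => hF.contDiffAt (hΩ.mem_nhds hs)
  have hcomp : ∀ s ∈ Ω, fderiv ℝ (fun x => A (F x)) s = Aclm.comp (fderiv ℝ F s) := by
    intro s hs
    have hdF : DifferentiableAt ℝ F s := (hF2 s hs).differentiableAt (by norm_num)
    have hcc := Aclm.hasFDerivAt.comp s hdF.hasFDerivAt
    have h2 : (⇑Aclm ∘ F) = fun x => A (F x) := by funext x; rw [Function.comp_apply, hAco]
    rw [h2] at hcc
    exact hcc.fderiv
  have hcol1 : ∀ vv, fderiv ℝ (fun x => A (F x)) t vv = A (fderiv ℝ F t vv) := by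
    intro vv; rw [hcomp t ht, ContinuousLinearMap.comp_apply, hAco]
  have hgdiff : DifferentiableAt ℝ (fun s => fderiv ℝ F s (Pi.single i 1)) t := by
    have h1 : ContDiffAt ℝ 1 (fderiv ℝ F) t := (hF2 t ht).fderiv_right (by norm_num)
    exact (h1.differentiableAt one_ne_zero).clm_apply (differentiableAt_const _)
  have hev : (fun s => fderiv ℝ (fun x => A (F x)) s (Pi.single i 1)) =ᶠ[nhds t]
      (fun s => Aclm (fderiv ℝ F s (Pi.single i 1))) := by
    filter_upwards [hΩ.mem_nhds ht] with s hs
    rw [hcomp s hs, ContinuousLinearMap.comp_apply]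
  have hcol2 : fderiv ℝ (fun s => fderiv ℝ (fun x => A (F x)) s (Pi.single i 1)) t (Pi.single j 1)
      = A (fderiv ℝ (fun s => fderiv ℝ F s (Pi.single i 1)) t (Pi.single j 1)) := by
    rw [hev.fderiv_eq]
    have hcc := Aclm.hasFDerivAt.comp t hgdiff.hasFDerivAt
    have h2 : (⇑Aclm ∘ fun s => fderiv ℝ F s (Pi.single i 1))
        = fun s => Aclm (fderiv ℝ F s (Pi.single i 1)) := rfl
    rw [h2] at hcc
    rw [hcc.fderiv, ContinuousLinearMap.comp_apply, hAco]
  rw [Fmix_eq_det, Fmix_eq_det]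
  have hmat : Mk d (fun k row => fderiv ℝ (fun x => A (F x)) t (Pi.single k 1) row)
        (fun row => fderiv ℝ (fun s => fderiv ℝ (fun x => A (F x)) s (Pi.single i 1)) t
          (Pi.single j 1) row)
      = LinearMap.toMatrix' A.toLinearMap *
        Mk d (fun k row => fderiv ℝ F t (Pi.single k 1) row)
          (fun row => fderiv ℝ (fun s => fderiv ℝ F s (Pi.single i 1)) t (Pi.single j 1) row) := by
    ext row col
    rw [Matrix.mul_apply]
    by_cases h : (col : ℕ) < d - 1
    · simp only [Mk, Matrix.of_apply, dif_pos h]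
      rw [hcol1]
      exact apply_eq_sum_mul A.toLinearMap _ row
    · simp only [Mk, Matrix.of_apply, dif_neg h]
      rw [hcol2]
      exact apply_eq_sum_mul A.toLinearMap _ row
  rw [hmat, Matrix.det_mul, LinearMap.det_toMatrix']

lemma calL_linearMap (d : ℕ) (F : (Fin (d - 1) → ℝ) → Fin d → ℝ)
    {Ω : Set (Fin (d - 1) → ℝ)} (hΩ : IsOpen Ω) (hF : ContDiffOn ℝ 2 F Ω)
    (A : (Fin d → ℝ) ≃ₗ[ℝ] (Fin d → ℝ)) {t : Fin (d - 1) → ℝ} (ht : t ∈ Ω) :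
    calL d (fun s => A (F s)) t = (LinearMap.det A.toLinearMap) ^ (d - 1) * calL d F t := by
  unfold calL
  have hmat : (Matrix.of fun i j : Fin (d - 1) => Fmix d (fun s => A (F s)) i j t)
      = (LinearMap.det A.toLinearMap) • (Matrix.of fun i j : Fin (d - 1) => Fmix d F i j t) := by
    ext i j
    simp [Fmix_linearMap d F hΩ hF A ht i j]
  rw [hmat, Matrix.det_smul, Fintype.card_fin]



lemma Fmix_comp {d : ℕ} (hd : 2 ≤ d) (F : (Fin (d - 1) → ℝ) → Fin d → ℝ)
    {Ω : Set (Fin (d - 1) → ℝ)} (hΩ : IsOpen Ω) (hF : ContDiffOn ℝ 2 F Ω)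
    {V : Set (Fin (d - 1) → ℝ)} (hV : IsOpen V) (φ : (Fin (d - 1) → ℝ) → Fin (d - 1) → ℝ)
    (hφ : ContDiffOn ℝ 2 φ V) (hmaps : ∀ s ∈ V, φ s ∈ Ω)
    {t : Fin (d - 1) → ℝ} (ht : t ∈ V) (i j : Fin (d - 1)) :
    Fmix d (F ∘ φ) i j t
      = (Matrix.of fun k l : Fin (d - 1) => fderiv ℝ φ t (Pi.single l 1) k).det *
        ∑ l, ∑ k, (fderiv ℝ φ t (Pi.single j 1) l * fderiv ℝ φ t (Pi.single i 1) k) *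
          Fmix d F k l (φ t) := by
  have hφ2 : ContDiffAt ℝ 2 φ t := hφ.contDiffAt (hV.mem_nhds ht)
  have hF2 : ContDiffAt ℝ 2 F (φ t) := hF.contDiffAt (hΩ.mem_nhds (hmaps t ht))
  have hφ' : HasFDerivAt φ (fderiv ℝ φ t) t := (hφ2.differentiableAt (by norm_num)).hasFDerivAt
  have hD2 : HasFDerivAt (fderiv ℝ F) (fderiv ℝ (fderiv ℝ F) (φ t)) (φ t) :=
    ((hF2.fderiv_right (by norm_num)).differentiableAt one_ne_zero).hasFDerivAt
  have hΦ2 : HasFDerivAt (fderiv ℝ φ) (fderiv ℝ (fderiv ℝ φ) t) t :=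
    ((hφ2.fderiv_right (by norm_num)).differentiableAt one_ne_zero).hasFDerivAt
  have hcomp : ∀ s ∈ V, fderiv ℝ (F ∘ φ) s = (fderiv ℝ F (φ s)).comp (fderiv ℝ φ s) := by
    intro s hs
    exact fderiv_comp s
      ((hF.contDiffAt (hΩ.mem_nhds (hmaps s hs))).differentiableAt (by norm_num))
      ((hφ.contDiffAt (hV.mem_nhds hs)).differentiableAt (by norm_num))
  have hcol1 : ∀ vv, fderiv ℝ (F ∘ φ) t vv = fderiv ℝ F (φ t) (fderiv ℝ φ t vv) := by
    intro vv; rw [hcomp t ht]; rfl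
  have hev : (fun s => fderiv ℝ (F ∘ φ) s (Pi.single i 1)) =ᶠ[nhds t]
      (fun s => (fderiv ℝ F (φ s)) ((fderiv ℝ φ s) (Pi.single i 1))) := by
    filter_upwards [hV.mem_nhds ht] with s hs
    rw [hcomp s hs]; rfl
  have hc : HasFDerivAt (fun s => fderiv ℝ F (φ s))
      ((fderiv ℝ (fderiv ℝ F) (φ t)).comp (fderiv ℝ φ t)) t := hD2.comp t hφ'
  have hu : HasFDerivAt (fun s => (fderiv ℝ φ s) (Pi.single i 1))
      ((fderiv ℝ φ t).comp 0 + (fderiv ℝ (fderiv ℝ φ) t).flip (Pi.single i 1)) t :=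
    hΦ2.clm_apply (hasFDerivAt_const _ _)
  have hG := hc.clm_apply hu
  have hcol2 : fderiv ℝ (fun s => fderiv ℝ (F ∘ φ) s (Pi.single i 1)) t (Pi.single j 1)
      = fderiv ℝ F (φ t) (fderiv ℝ (fderiv ℝ φ) t (Pi.single j 1) (Pi.single i 1))
        + fderiv ℝ (fderiv ℝ F) (φ t) (fderiv ℝ φ t (Pi.single j 1))
            (fderiv ℝ φ t (Pi.single i 1)) := by
    rw [hev.fderiv_eq, hG.fderiv]
    simp only [ContinuousLinearMap.add_apply, ContinuousLinearMap.comp_apply,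
      ContinuousLinearMap.flip_apply, ContinuousLinearMap.zero_apply, map_zero, zero_add]
  have hbil : fderiv ℝ (fderiv ℝ F) (φ t) (fderiv ℝ φ t (Pi.single j 1))
        (fderiv ℝ φ t (Pi.single i 1))
      = ∑ l, ∑ k, (fderiv ℝ φ t (Pi.single j 1) l * fderiv ℝ φ t (Pi.single i 1) k) •
          fderiv ℝ (fderiv ℝ F) (φ t) (Pi.single l 1) (Pi.single k 1) := by
    rw [clm_apply_eq_sum (fderiv ℝ (fderiv ℝ F) (φ t)) (fderiv ℝ φ t (Pi.single j 1)),
      ContinuousLinearMap.sum_apply]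
    refine Finset.sum_congr rfl fun l _ => ?_
    rw [ContinuousLinearMap.smul_apply,
      clm_apply_eq_sum (fderiv ℝ (fderiv ℝ F) (φ t) (Pi.single l 1))
        (fderiv ℝ φ t (Pi.single i 1)), Finset.smul_sum]
    refine Finset.sum_congr rfl fun k _ => ?_
    rw [smul_smul]
  have hmat : Mk d (fun k row => fderiv ℝ (F ∘ φ) t (Pi.single k 1) row)
        (fun row => fderiv ℝ (fun s => fderiv ℝ (F ∘ φ) s (Pi.single i 1)) t
          (Pi.single j 1) row)
      = Mk d (fun k row => ∑ c, (Matrix.of fun k' l' : Fin (d - 1) =>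
            fderiv ℝ φ t (Pi.single l' 1) k') c k * fderiv ℝ F (φ t) (Pi.single c 1) row)
          (fun row => (∑ l, ∑ k, (fderiv ℝ φ t (Pi.single j 1) l *
              fderiv ℝ φ t (Pi.single i 1) k) •
              fderiv ℝ (fderiv ℝ F) (φ t) (Pi.single l 1) (Pi.single k 1)) row
            + ∑ c, fderiv ℝ (fderiv ℝ φ) t (Pi.single j 1) (Pi.single i 1) c *
                fderiv ℝ F (φ t) (Pi.single c 1) row) := by
    ext row col
    by_cases h : (col : ℕ) < d - 1
    · simp only [Mk, Matrix.of_apply, dif_pos h]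
      rw [hcol1, clm_apply_eq_sum (fderiv ℝ F (φ t)) (fderiv ℝ φ t (Pi.single ⟨(col:ℕ), h⟩ 1)),
        Finset.sum_apply]
      exact Finset.sum_congr rfl fun c _ => by simp
    · simp only [Mk, Matrix.of_apply, dif_neg h]
      rw [hcol2, hbil,
        clm_apply_eq_sum (fderiv ℝ F (φ t))
          (fderiv ℝ (fderiv ℝ φ) t (Pi.single j 1) (Pi.single i 1))]
      simp only [Pi.add_apply, Finset.sum_apply, Pi.smul_apply, smul_eq_mul]
      exact add_comm _ _
  have hFmixF : ∀ (k l : Fin (d - 1)),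
      (Mk d (fun c row => fderiv ℝ F (φ t) (Pi.single c 1) row)
        (fun row => fderiv ℝ (fderiv ℝ F) (φ t) (Pi.single l 1) (Pi.single k 1) row)).det
      = Fmix d F k l (φ t) := by
    intro k l
    rw [Fmix_eq_det]
    congr 1
    funext row
    rw [fderiv_fderiv_single hF2]
  rw [Fmix_eq_det, hmat,
    detMk_combo hd (fun c row => fderiv ℝ F (φ t) (Pi.single c 1) row)
      ((∑ l, ∑ k, (fderiv ℝ φ t (Pi.single j 1) l * fderiv ℝ φ t (Pi.single i 1) k) •
          fderiv ℝ (fderiv ℝ F) (φ t) (Pi.single l 1) (Pi.single k 1)))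
      (Matrix.of fun k' l' : Fin (d - 1) => fderiv ℝ φ t (Pi.single l' 1) k')
      (fun c => fderiv ℝ (fderiv ℝ φ) t (Pi.single j 1) (Pi.single i 1) c)]
  congr 1
  rw [detMk_sum hd]
  refine Finset.sum_congr rfl fun l _ => ?_
  rw [detMk_sum hd]
  refine Finset.sum_congr rfl fun k _ => ?_
  rw [detMk_smul hd]
  rw [hFmixF k l]

lemma calL_comp {d : ℕ} (hd : 2 ≤ d) (F : (Fin (d - 1) → ℝ) → Fin d → ℝ)
    {Ω : Set (Fin (d - 1) → ℝ)} (hΩ : IsOpen Ω) (hF : ContDiffOn ℝ 2 F Ω)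
    {V : Set (Fin (d - 1) → ℝ)} (hV : IsOpen V) (φ : (Fin (d - 1) → ℝ) → Fin (d - 1) → ℝ)
    (hφ : ContDiffOn ℝ 2 φ V) (hmaps : ∀ s ∈ V, φ s ∈ Ω)
    {t : Fin (d - 1) → ℝ} (ht : t ∈ V) :
    calL d (F ∘ φ) t = ((fderiv ℝ φ t).det) ^ (d + 1) * calL d F (φ t) := by
  have hPdet : (Matrix.of fun k l : Fin (d - 1) => fderiv ℝ φ t (Pi.single l 1) k).det
      = (fderiv ℝ φ t).det := by
    rw [toMatrix'_eq, LinearMap.det_toMatrix']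
  have h1 : (Matrix.of fun i j : Fin (d - 1) => Fmix d (F ∘ φ) i j t)
      = (Matrix.of fun k l : Fin (d - 1) => fderiv ℝ φ t (Pi.single l 1) k).det •
        ((Matrix.of fun k l : Fin (d - 1) => fderiv ℝ φ t (Pi.single l 1) k).transpose *
          (Matrix.of fun k l : Fin (d - 1) => Fmix d F k l (φ t)) *
          (Matrix.of fun k l : Fin (d - 1) => fderiv ℝ φ t (Pi.single l 1) k)) := by
    ext i j
    simp only [Matrix.smul_apply, Matrix.of_apply, smul_eq_mul]
    rw [Fmix_comp hd F hΩ hF hV φ hφ hmaps ht i j]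
    congr 1
    rw [Matrix.mul_apply]
    refine Finset.sum_congr rfl fun l _ => ?_
    rw [Matrix.mul_apply, Finset.sum_mul]
    refine Finset.sum_congr rfl fun k _ => ?_
    simp only [Matrix.transpose_apply, Matrix.of_apply]
    ring
  rw [calL, h1, Matrix.det_smul, Matrix.det_mul, Matrix.det_mul, Matrix.det_transpose,
    Fintype.card_fin, hPdet]
  have hpow : ∀ x y : ℝ, x ^ (d - 1) * (x * y * x) = x ^ (d + 1) * y := by
    intro x y
    have h2 : d + 1 = (d - 1) + 2 := by omega
    rw [h2, pow_add]
    ring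
  rw [hpow]
  rfl

/-- Invariance properties of affine surface measure: equivariance under invertible linear
maps of the target, and invariance under `C²` reparametrization of the source. -/
theorem affine_surface_measure_invariance (d : ℕ) (hd : 2 ≤ d)
    (F : (Fin (d - 1) → ℝ) → Fin d → ℝ) (Ω : Set (Fin (d - 1) → ℝ))
    (hΩ : IsOpen Ω) (hF : ContDiffOn ℝ 2 F Ω)
    (U : Set (Fin (d - 1) → ℝ)) (hU : MeasurableSet U) (hUΩ : U ⊆ Ω)
    (A : (Fin d → ℝ) ≃ₗ[ℝ] (Fin d → ℝ))
    (V : Set (Fin (d - 1) → ℝ)) (hV : IsOpen V)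
    (φ ψ : (Fin (d - 1) → ℝ) → Fin (d - 1) → ℝ)
    (hφ : ContDiffOn ℝ 2 φ V) (hψ : ContDiffOn ℝ 2 ψ U)
    (himg : φ '' V = U) (hlr : ∀ x ∈ V, ψ (φ x) = x) (hrl : ∀ y ∈ U, φ (ψ y) = y) :
    affSurf d (fun t => A (F t)) U =
      |LinearMap.det (A.toLinearMap)| ^ (((d : ℝ) - 1) / ((d : ℝ) + 1)) * affSurf d F U ∧
    affSurf d (F ∘ φ) V = affSurf d F (φ '' V) := by
  have hd1 : ((d : ℝ) + 1) ≠ 0 := by positivity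
  constructor
  · -- equivariance under linear maps
    unfold affSurf
    have hint : Set.EqOn (fun x => |calL d (fun t => A (F t)) x| ^ (1 / ((d : ℝ) + 1)))
        (fun x => |LinearMap.det A.toLinearMap| ^ (((d : ℝ) - 1) / ((d : ℝ) + 1)) *
          |calL d F x| ^ (1 / ((d : ℝ) + 1))) U := by
      intro x hx
      simp only
      rw [calL_linearMap d F hΩ hF A (hUΩ hx), abs_mul, abs_pow,
        Real.mul_rpow (pow_nonneg (abs_nonneg _) _) (abs_nonneg _)]
      congr 1
      rw [← Real.rpow_natCast |LinearMap.det A.toLinearMap| (d - 1),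
        ← Real.rpow_mul (abs_nonneg _)]
      congr 1
      have hcast : ((d - 1 : ℕ) : ℝ) = (d : ℝ) - 1 := by
        have h1 : (1 : ℕ) ≤ d := by omega
        push_cast [Nat.cast_sub h1]
        ring
      rw [hcast]
      field_simp
    rw [MeasureTheory.setIntegral_congr_fun hU hint]
    exact MeasureTheory.integral_const_mul _ _
  · -- invariance under reparametrization
    have hVmeas : MeasurableSet V := hV.measurableSet
    have hmaps : ∀ s ∈ V, φ s ∈ Ω := fun s hs => hUΩ (by
      rw [← himg]; exact Set.mem_image_of_mem φ hs)
    have hinj : Set.InjOn φ V := fun a ha b hb hab => by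
      rw [← hlr a ha, ← hlr b hb, hab]
    have hder : ∀ x ∈ V, HasFDerivWithinAt φ (fderiv ℝ φ x) V x := fun x hx =>
      ((hφ.contDiffAt (hV.mem_nhds hx)).differentiableAt
        (by norm_num)).hasFDerivAt.hasFDerivWithinAt
    have himgint : affSurf d F (φ '' V)
        = ∫ t in V, |(fderiv ℝ φ t).det| •
            (|calL d F (φ t)| ^ (1 / ((d : ℝ) + 1))) :=
      MeasureTheory.integral_image_eq_integral_abs_det_fderiv_smul volume hVmeas hder hinj
        (fun y => |calL d F y| ^ (1 / ((d : ℝ) + 1)))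
    rw [himgint]
    unfold affSurf
    refine MeasureTheory.setIntegral_congr_fun hVmeas (fun t ht => ?_)
    simp only [smul_eq_mul]
    rw [calL_comp hd F hΩ hF hV φ hφ hmaps ht, abs_mul, abs_pow,
      Real.mul_rpow (pow_nonneg (abs_nonneg _) _) (abs_nonneg _)]
    congr 1
    rw [← Real.rpow_natCast |(fderiv ℝ φ t).det| (d + 1),
      ← Real.rpow_mul (abs_nonneg _)]
    have hone : ((d + 1 : ℕ) : ℝ) * (1 / ((d : ℝ) + 1)) = 1 := by
      push_cast
      field_simp
    rw [hone, Real.rpow_one]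
end RadonParaboloid
end
end
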